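/- arXiv:1602.02661 — 2 statements merged into one kernel-verified Lean document; each statement's English description precedes it below -/
import Mathlib

section
/- Let T : D(T) → H be a closed densely defined operator on a quaternionic Hilbert space. Then C_T := (1 + T*T)⁻¹ is a well-defined positive operator in B(H) with range equal to D(T*T), and Z_T := T·√(C_T) is defined on all of H, belongs to B(H), and satisfies ‖Z_T‖ ≤ 1 and 1 - Z_T* Z_T = C_T. Moreover Ran(√(C_T)) is a core for T and T = closure of Z_T (√(1 - Z_T* Z_T))⁻¹. -/
noncomputable section

notation "ℍ" => Quaternion ℝ

open MeasureTheory Filter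

/-- Borel σ-algebra on the quaternions. -/
instance : MeasurableSpace ℍ := borel ℍ

instance : BorelSpace ℍ := ⟨rfl⟩

/-- A quaternionic (right) Hilbert space structure on a normed additive group `H`:
a right scalar multiplication by quaternions together with an ℍ-valued Hermitian
scalar product compatible with the norm.  (Completeness of `H` is assumed
separately via `[CompleteSpace H]`.) -/
structure QHS (H : Type) [NormedAddCommGroup H] where
  smul : H → ℍ → H
  inn : H → H → ℍ
  add_smul' : ∀ (u v : H) (q : ℍ), smul (u + v) q = smul u q + smul v q
  smul_add' : ∀ (u : H) (p q : ℍ), smul u (p + q) = smul u p + smul u q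
  smul_mul' : ∀ (u : H) (p q : ℍ), smul u (p * q) = smul (smul u p) q
  smul_one' : ∀ u : H, smul u 1 = u
  inn_add_right : ∀ u v w : H, inn u (v + w) = inn u v + inn u w
  inn_smul_right : ∀ (u v : H) (q : ℍ), inn u (smul v q) = inn u v * q
  inn_conj : ∀ u v : H, inn u v = star (inn v u)
  inn_self_real : ∀ u : H, inn u u = (((inn u u).re : ℝ) : ℍ)
  norm_sq' : ∀ u : H, ‖u‖ ^ 2 = (inn u u).re

variable {H : Type} [NormedAddCommGroup H]

/-- The graph of an operator `T` with domain `D`. -/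
def graphOf (T : H → H) (D : Set H) : Set (H × H) := {p | p.1 ∈ D ∧ p.2 = T p.1}

/-- Domain of a graph. -/
def graphDom (G : Set (H × H)) : Set H := {u | ∃ w, (u, w) ∈ G}

/-- A function extracted from a graph (by choice). -/
def graphFun (G : Set (H × H)) : H → H := fun u =>
  letI : Nonempty H := ⟨0⟩
  Classical.epsilon fun w => (u, w) ∈ G

/-- Boundedness of an everywhere defined operator. -/
def BoundedOp (T : H → H) : Prop := ∃ C : ℝ, ∀ u : H, ‖T u‖ ≤ C * ‖u‖

/-- The operator norm. -/
def opNorm (T : H → H) : ℝ := sInf {C : ℝ | 0 ≤ C ∧ ∀ u : H, ‖T u‖ ≤ C * ‖u‖}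

/-- Closed operator: the graph is closed. -/
def ClosedOp (T : H → H) (D : Set H) : Prop := IsClosed (graphOf T D)

/-- The domain `D(T²)`. -/
def D2 (T : H → H) (D : Set H) : Set H := {u ∈ D | T u ∈ D}

/-- The slice complex plane `ℂ_ι = {a + ι b}` determined by an imaginary unit `ι`. -/
def Cslice (ι : ℍ) : Set ℍ :=
  {x : ℍ | ∃ a b : ℝ, x = ((a : ℝ) : ℍ) + ι * ((b : ℝ) : ℍ)}

/-- The closed upper half slice plane `ℂ_ι⁺ = {a + ι b : b ≥ 0}`. -/
def Cplus (ι : ℍ) : Set ℍ :=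
  {x : ℍ | ∃ a b : ℝ, 0 ≤ b ∧ x = ((a : ℝ) : ℍ) + ι * ((b : ℝ) : ℍ)}

namespace QHS

variable (𝒮 : QHS H)

/-- Right ℍ-linearity of an everywhere defined map. -/
def RightLinear (T : H → H) : Prop :=
  (∀ u v : H, T (u + v) = T u + T v) ∧ ∀ (u : H) (q : ℍ), T (𝒮.smul u q) = 𝒮.smul (T u) q

/-- A (right ℍ-linear) subspace. -/
def IsSubspace (D : Set H) : Prop :=
  (0 : H) ∈ D ∧ (∀ u ∈ D, ∀ v ∈ D, u + v ∈ D) ∧ ∀ u ∈ D, ∀ q : ℍ, 𝒮.smul u q ∈ D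

/-- Right ℍ-linearity on a domain `D`. -/
def RightLinearOn (T : H → H) (D : Set H) : Prop :=
  (∀ u ∈ D, ∀ v ∈ D, T (u + v) = T u + T v) ∧
    ∀ u ∈ D, ∀ q : ℍ, T (𝒮.smul u q) = 𝒮.smul (T u) q

/-- `S` is the adjoint of `T` (both everywhere defined):  `⟨S u|v⟩ = ⟨u|T v⟩`. -/
def AdjointPair (T S : H → H) : Prop := ∀ u v : H, 𝒮.inn (S u) v = 𝒮.inn u (T v)

def SelfAdjointOp (T : H → H) : Prop := ∀ u v : H, 𝒮.inn (T u) v = 𝒮.inn u (T v)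

def AntiSelfAdjointOp (T : H → H) : Prop := ∀ u v : H, 𝒮.inn (T u) v = -𝒮.inn u (T v)

/-- Positivity: `⟨u|T u⟩` is real and non-negative. -/
def PositiveOp (T : H → H) : Prop :=
  ∀ u : H, 𝒮.inn u (T u) = ((((𝒮.inn u (T u)).re : ℝ)) : ℍ) ∧ 0 ≤ (𝒮.inn u (T u)).re

/-- Positivity on a domain. -/
def PositiveOn (T : H → H) (D : Set H) : Prop :=
  ∀ u ∈ D, 𝒮.inn u (T u) = ((((𝒮.inn u (T u)).re : ℝ)) : ℍ) ∧ 0 ≤ (𝒮.inn u (T u)).re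

/-- Unitarity: right linear, surjective, inner-product preserving. -/
def UnitaryOp (T : H → H) : Prop :=
  𝒮.RightLinear T ∧ Function.Surjective T ∧ ∀ u v : H, 𝒮.inn (T u) (T v) = 𝒮.inn u v

/-- The domain of the adjoint of `T : D → H`. -/
def adjDom (T : H → H) (D : Set H) : Set H :=
  {u : H | ∃ w : H, ∀ v ∈ D, 𝒮.inn w v = 𝒮.inn u (T v)}

/-- The adjoint operator of `T : D → H` (defined by choice; it is the genuine
adjoint when `D` is dense). -/
def adjOp (T : H → H) (D : Set H) : H → H := fun u =>
  letI := Classical.propDecidable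
  if h : ∃ w : H, ∀ v ∈ D, 𝒮.inn w v = 𝒮.inn u (T v) then h.choose else 0

/-- Self-adjointness of an unbounded operator: `T* = T` (same domain, same values). -/
def SelfAdjointUnb (T : H → H) (D : Set H) : Prop :=
  𝒮.adjDom T D = D ∧ ∀ u ∈ D, 𝒮.adjOp T D u = T u

/-- Normality of an unbounded operator: `T T* = T* T`. -/
def NormalUnb (T : H → H) (D : Set H) : Prop :=
  ({u ∈ D | T u ∈ 𝒮.adjDom T D} = {u ∈ 𝒮.adjDom T D | 𝒮.adjOp T D u ∈ D}) ∧
    ∀ u ∈ D, T u ∈ 𝒮.adjDom T D → 𝒮.adjOp T D (T u) = T (𝒮.adjOp T D u)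

/-- The positive square root of a positive bounded operator (by choice). -/
def posSqrt (T : H → H) : H → H :=
  letI : Nonempty (H → H) := ⟨id⟩
  Classical.epsilon fun R : H → H =>
    𝒮.RightLinear R ∧ BoundedOp R ∧ 𝒮.PositiveOp R ∧ 𝒮.SelfAdjointOp R ∧
      ∀ u : H, R (R u) = T u

/-- The operator `Δ_q(T) = T² - T (2 Re q) + |q|² 1`. -/
def Delta (T : H → H) (q : ℍ) : H → H := fun u =>
  T (T u) - 𝒮.smul (T u) (((2 * q.re : ℝ)) : ℍ) + 𝒮.smul u (((‖q‖ ^ 2 : ℝ)) : ℍ)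

/-- Membership in the spherical resolvent set: `Δ_q(T)` is injective with dense range
and bounded inverse. -/
def InSphResolvent (T : H → H) (D : Set H) (q : ℍ) : Prop :=
  (∀ u ∈ D2 T D, 𝒮.Delta T q u = 0 → u = 0) ∧
    Dense (𝒮.Delta T q '' D2 T D) ∧
    ∃ C : ℝ, ∀ u ∈ D2 T D, ‖u‖ ≤ C * ‖𝒮.Delta T q u‖

/-- The spherical spectrum. -/
def sphSpectrum (T : H → H) (D : Set H) : Set ℍ := {q | ¬𝒮.InSphResolvent T D q}

/-- The spherical point spectrum. -/
def sphPointSpectrum (T : H → H) (D : Set H) : Set ℍ :=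
  {q | ∃ u ∈ D2 T D, u ≠ 0 ∧ 𝒮.Delta T q u = 0}

/-- The spherical residual spectrum. -/
def sphResidualSpectrum (T : H → H) (D : Set H) : Set ℍ :=
  {q | (∀ u ∈ D2 T D, 𝒮.Delta T q u = 0 → u = 0) ∧
    ¬Dense (𝒮.Delta T q '' D2 T D)}

/-- The spherical continuous spectrum. -/
def sphContinuousSpectrum (T : H → H) (D : Set H) : Set ℍ :=
  {q | (∀ u ∈ D2 T D, 𝒮.Delta T q u = 0 → u = 0) ∧
    Dense (𝒮.Delta T q '' D2 T D) ∧
    ¬∃ C : ℝ, ∀ u ∈ D2 T D, ‖u‖ ≤ C * ‖𝒮.Delta T q u‖}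

/-- A Hilbert basis of a quaternionic Hilbert space. -/
def IsHilbertBasis (N : Set H) : Prop :=
  (∀ z ∈ N, ‖z‖ = 1) ∧ (∀ z ∈ N, ∀ w ∈ N, z ≠ w → 𝒮.inn z w = 0) ∧
    ∀ u : H, (∀ z ∈ N, 𝒮.inn z u = 0) → u = 0

/-- `L` is the left scalar multiplication induced by the Hilbert basis `N`:
`L_q u = Σ_{z ∈ N} z q ⟨z|u⟩`. -/
def IsInducedLSM (N : Set H) (L : ℍ → H → H) : Prop :=
  ∀ (q : ℍ) (u : H),
    HasSum (fun z : N => 𝒮.smul (z : H) (q * 𝒮.inn (z : H) u)) (L q u)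

/-- `L` is a left scalar multiplication of `H` (induced by some Hilbert basis). -/
def IsLSM (L : ℍ → H → H) : Prop :=
  ∃ N : Set H, 𝒮.IsHilbertBasis N ∧ 𝒮.IsInducedLSM N L

/-- The orthogonal complement of a subset. -/
def orthC (S : Set H) : Set H := {u : H | ∀ v ∈ S, 𝒮.inn u v = 0}

/-- The complex subspace `H₊^{Jι} = {u : J u = u ι}`. -/
def Hplus (J : H → H) (ι : ℍ) : Set H := {u : H | J u = 𝒮.smul u ι}

/-- The complex subspace `H₋^{Jι} = {u : J u = -u ι}`. -/
def Hminus (J : H → H) (ι : ℍ) : Set H := {u : H | J u = -𝒮.smul u ι}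

end QHS

/-- A quaternionic projection valued measure (qPVM) over `ℂ_ι⁺` in `H`. -/
structure IsQPVM (𝒮 : QHS H) (ι : ℍ) (P : Set ℍ → H → H) : Prop where
  proj_linear : ∀ E : Set ℍ, MeasurableSet E → E ⊆ Cplus ι → 𝒮.RightLinear (P E)
  proj_bounded : ∀ E : Set ℍ, MeasurableSet E → E ⊆ Cplus ι → BoundedOp (P E)
  proj_idem : ∀ E : Set ℍ, MeasurableSet E → E ⊆ Cplus ι → ∀ u, P E (P E u) = P E u
  proj_sa : ∀ E : Set ℍ, MeasurableSet E → E ⊆ Cplus ι → 𝒮.SelfAdjointOp (P E)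
  proj_pos : ∀ E : Set ℍ, MeasurableSet E → E ⊆ Cplus ι → 𝒮.PositiveOp (P E)
  total : ∀ u : H, P (Cplus ι) u = u
  inter : ∀ E F : Set ℍ, MeasurableSet E → E ⊆ Cplus ι → MeasurableSet F → F ⊆ Cplus ι →
    ∀ u, P (E ∩ F) u = P E (P F u)
  sigma_add : ∀ E : ℕ → Set ℍ, (∀ n, MeasurableSet (E n) ∧ E n ⊆ Cplus ι) →
    (Pairwise fun n m => Disjoint (E n) (E m)) →
    ∀ u : H, HasSum (fun n => P (E n) u) (P (⋃ n, E n) u)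

/-- The support of a qPVM: points of `ℂ_ι⁺` all of whose relatively open neighbourhoods
have non-zero projection. -/
def suppP (ι : ℍ) (P : Set ℍ → H → H) : Set ℍ :=
  {x ∈ Cplus ι | ∀ U : Set ℍ, IsOpen U → x ∈ U → ∃ u : H, P (U ∩ Cplus ι) u ≠ 0}

/-- An intertwining quaternionic PVM (iqPVM): a qPVM together with a commuting left
scalar multiplication. -/
def IsIQPVM (𝒮 : QHS H) (ι : ℍ) (P : Set ℍ → H → H) (L : ℍ → H → H) : Prop :=
  IsQPVM 𝒮 ι P ∧ 𝒮.IsLSM L ∧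
    ∀ E : Set ℍ, MeasurableSet E → E ⊆ Cplus ι →
      ∀ (q : ℍ) (u : H), P E (L q u) = L q (P E u)

/-- Data of a simple function: coefficients and pairwise disjoint Borel subsets of `ℂ_ι⁺`. -/
def IsSimpleData (ι : ℍ) {n : ℕ} (c : Fin n → ℍ) (E : Fin n → Set ℍ) : Prop :=
  (∀ ℓ, MeasurableSet (E ℓ) ∧ E ℓ ⊆ Cplus ι) ∧
    Pairwise fun ℓ ℓ' => Disjoint (E ℓ) (E ℓ')

/-- `S = ∫ φ d𝒫`, characterized by uniform approximation (on the support of `P`)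
by simple functions together with approximation of `S` by the corresponding
elementary integrals `Σ_ℓ L_{c_ℓ} P(E_ℓ)`. -/
def IsBoundedIntegral (𝒮 : QHS H) (ι : ℍ) (P : Set ℍ → H → H) (L : ℍ → H → H)
    (φ : ℍ → ℍ) (S : H → H) : Prop :=
  ∀ ε : ℝ, 0 < ε → ∃ (n : ℕ) (c : Fin n → ℍ) (E : Fin n → Set ℍ),
    IsSimpleData ι c E ∧
    (∀ x ∈ suppP ι P, ‖φ x - ∑ ℓ, Set.indicator (E ℓ) (fun _ => c ℓ) x‖ ≤ ε) ∧
    ∀ u : H, ‖S u - ∑ ℓ, L (c ℓ) (P (E ℓ) u)‖ ≤ ε * ‖u‖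

/-- The integral of a bounded measurable function with respect to an iqPVM
(defined by choice from the characterizing property). -/
def bInt (𝒮 : QHS H) (ι : ℍ) (P : Set ℍ → H → H) (L : ℍ → H → H) (φ : ℍ → ℍ) : H → H :=
  letI : Nonempty (H → H) := ⟨id⟩
  Classical.epsilon fun S : H → H => IsBoundedIntegral 𝒮 ι P L φ S

/-- The `P`-essential supremum norm `‖φ‖_∞^{(P)}`. -/
def essSupNorm (ι : ℍ) (P : Set ℍ → H → H) (φ : ℍ → ℍ) : ℝ :=
  sInf {k : ℝ | 0 ≤ k ∧ ∀ u : H, P {x ∈ Cplus ι | k < ‖φ x‖} u = 0}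

/-- `μ` is the positive Borel measure `μ_u^{(P)} : E ↦ ⟨u|P(E)u⟩`. -/
def muMatches (𝒮 : QHS H) (ι : ℍ) (P : Set ℍ → H → H) (u : H) (μ : Measure ℍ) : Prop :=
  ∀ E : Set ℍ, MeasurableSet E →
    μ E = ENNReal.ofReal ((𝒮.inn u (P (E ∩ Cplus ι) u)).re)

/-- The natural domain `D_f = {u : f ∈ L²(μ_u^{(P)})}` of `∫ f d𝒫`. -/
def Dnat (𝒮 : QHS H) (ι : ℍ) (P : Set ℍ → H → H) (f : ℍ → ℍ) : Set H :=
  {u : H | ∃ μ : Measure ℍ, muMatches 𝒮 ι P u μ ∧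
    (∫⁻ x, ENNReal.ofReal (‖f x‖ ^ 2) ∂μ) < ⊤}

/-- The truncation of `f` at level `n`. -/
def trunc (f : ℍ → ℍ) (n : ℕ) : ℍ → ℍ := fun x => if ‖f x‖ ≤ (n : ℝ) then f x else 0

/-- The integral of a possibly unbounded measurable function with respect to an iqPVM:
the strong limit of the integrals of its truncations. -/
def uInt (𝒮 : QHS H) (ι : ℍ) (P : Set ℍ → H → H) (L : ℍ → H → H) (f : ℍ → ℍ) : H → H :=
  fun u =>
    letI : Nonempty H := ⟨0⟩
    limUnder atTop fun n : ℕ => bInt 𝒮 ι P L (trunc f n) u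

/-- The inverse `(1 + T*T)⁻¹` of `1 + T*T` (by choice). -/
def CT (𝒮 : QHS H) (T : H → H) (D : Set H) : H → H :=
  letI : Nonempty (H → H) := ⟨id⟩
  Classical.epsilon fun C : H → H =>
    (∀ y : H, C y ∈ D ∧ T (C y) ∈ 𝒮.adjDom T D ∧ C y + 𝒮.adjOp T D (T (C y)) = y) ∧
      ∀ u ∈ D, T u ∈ 𝒮.adjDom T D → C (u + 𝒮.adjOp T D (T u)) = u

/-- The bounded transform `Z_T = T (1 + T*T)^{-1/2}`. -/
def ZT (𝒮 : QHS H) (T : H → H) (D : Set H) : H → H := fun u =>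
  T (𝒮.posSqrt (CT 𝒮 T D) u)

end

open scoped ComplexConjugate

namespace QHSAux

/-- complex → quaternion embedding -/
def cq (c : ℂ) : ℍ := ⟨c.re, c.im, 0, 0⟩

/-- quaternion → complex (first two components) -/
def qc (q : ℍ) : ℂ := ⟨q.re, q.imI⟩

def jq : ℍ := ⟨0, 0, 1, 0⟩

@[simp] lemma cq_re (c : ℂ) : (cq c).re = c.re := rfl
@[simp] lemma cq_imI (c : ℂ) : (cq c).imI = c.im := rfl
@[simp] lemma cq_imJ (c : ℂ) : (cq c).imJ = 0 := rfl
@[simp] lemma cq_imK (c : ℂ) : (cq c).imK = 0 := rfl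
@[simp] lemma qc_re (q : ℍ) : (qc q).re = q.re := rfl
@[simp] lemma qc_im (q : ℍ) : (qc q).im = q.imI := rfl
@[simp] lemma jq_re : jq.re = 0 := rfl
@[simp] lemma jq_imI : jq.imI = 0 := rfl
@[simp] lemma jq_imJ : jq.imJ = 1 := rfl
@[simp] lemma jq_imK : jq.imK = 0 := rfl

lemma cq_add (c d : ℂ) : cq (c + d) = cq c + cq d := by
  ext <;> simp

lemma cq_mul (c d : ℂ) : cq (c * d) = cq c * cq d := by
  ext <;> simp [Quaternion.re_mul, Quaternion.imI_mul, Quaternion.imJ_mul,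
    Quaternion.imK_mul, Complex.mul_re, Complex.mul_im]

lemma cq_one : cq 1 = 1 := by ext <;> simp [Quaternion.re_one, Quaternion.imI_one, Quaternion.imJ_one, Quaternion.imK_one]

lemma cq_zero : cq 0 = 0 := by ext <;> simp [Quaternion.re_zero, Quaternion.imI_zero, Quaternion.imJ_zero, Quaternion.imK_zero]

lemma cq_star (c : ℂ) : cq (conj c) = star (cq c) := by
  ext <;> simp

lemma qc_add (p q : ℍ) : qc (p + q) = qc p + qc q := by
  apply Complex.ext <;> simp

lemma qc_star (q : ℍ) : qc (star q) = conj (qc q) := by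
  apply Complex.ext <;> simp

lemma qc_cq_mul (c : ℂ) (q : ℍ) : qc (cq c * q) = c * qc q := by
  apply Complex.ext <;>
    simp [Quaternion.re_mul, Quaternion.imI_mul, Complex.mul_re, Complex.mul_im]

lemma qc_coe (r : ℝ) : qc ((r : ℍ)) = (r : ℂ) := by
  apply Complex.ext <;> simp

lemma qc_zero : qc 0 = 0 := by apply Complex.ext <;> simp [Quaternion.re_zero, Quaternion.imI_zero, Quaternion.imJ_zero, Quaternion.imK_zero]

lemma cq_qc_jq (q : ℍ) : q = cq (qc q) + cq (⟨q.imJ, q.imK⟩ : ℂ) * jq := by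
  ext <;> simp [Quaternion.re_mul, Quaternion.imI_mul, Quaternion.imJ_mul,
    Quaternion.imK_mul]

lemma jq_mul_jq : jq * jq = -1 := by
  ext <;> simp [Quaternion.re_one, Quaternion.imI_one, Quaternion.imJ_one, Quaternion.imK_one, Quaternion.re_mul, Quaternion.imI_mul, Quaternion.imJ_mul,
    Quaternion.imK_mul]

lemma cq_mul_jq (c : ℂ) : cq c * jq = jq * cq (conj c) := by
  ext <;> simp [Quaternion.re_mul, Quaternion.imI_mul, Quaternion.imJ_mul,
    Quaternion.imK_mul]

/-- `qc (x * jq)` extracts (-imJ, -imK). -/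
lemma qc_mul_jq (x : ℍ) : qc (x * jq) = ⟨-x.imJ, -x.imK⟩ := by
  apply Complex.ext <;> simp [Quaternion.re_mul, Quaternion.imI_mul]

lemma qc_conjj (x : ℍ) : qc (star jq * (x * jq)) = (starRingEnd ℂ) (qc x) := by
  apply Complex.ext <;>
    simp [Quaternion.re_mul, Quaternion.imI_mul, Quaternion.imJ_mul,
      Quaternion.imK_mul]

lemma quat_ext_of_qc (x y : ℍ) (h1 : qc x = qc y) (h2 : qc (x * jq) = qc (y * jq)) : x = y := by
  have e1 : x.re = y.re := congrArg Complex.re h1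
  have e2 : x.imI = y.imI := congrArg Complex.im h1
  have e3 : (-x.imJ : ℝ) = -y.imJ := by
    simpa [qc_mul_jq] using congrArg Complex.re h2
  have e4 : (-x.imK : ℝ) = -y.imK := by
    simpa [qc_mul_jq] using congrArg Complex.im h2
  exact Quaternion.ext x y e1 e2 (neg_injective e3) (neg_injective e4)

lemma norm_q_sq (q : ℍ) : ‖q‖ ^ 2 = Quaternion.normSq q := by
  rw [sq, ← Quaternion.normSq_eq_norm_mul_self]

end QHSAux

section QHSBasic

variable {H : Type} [NormedAddCommGroup H] (𝒮 : QHS H)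

namespace QHSAux

open QHSAux

lemma smul_zero_q (u : H) : 𝒮.smul u 0 = 0 := by
  have h := 𝒮.smul_add' u 0 0
  simpa using (add_right_injective (𝒮.smul u 0) (by simpa using h.symm))

lemma zero_smul_q (q : ℍ) : 𝒮.smul 0 q = 0 := by
  have h := 𝒮.add_smul' 0 0 q
  simpa using (add_right_injective (𝒮.smul (0 : H) q) (by simpa using h.symm))

lemma smul_neg_q (u : H) (q : ℍ) : 𝒮.smul u (-q) = -𝒮.smul u q := by
  have h := 𝒮.smul_add' u q (-q)
  rw [add_neg_cancel, smul_zero_q] at h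
  exact eq_neg_of_add_eq_zero_right h.symm

lemma neg_smul_q (u : H) (q : ℍ) : 𝒮.smul (-u) q = -𝒮.smul u q := by
  have h := 𝒮.add_smul' u (-u) q
  rw [add_neg_cancel, zero_smul_q] at h
  exact eq_neg_of_add_eq_zero_right h.symm

lemma smul_neg_one (u : H) : 𝒮.smul u (-1) = -u := by
  rw [smul_neg_q, 𝒮.smul_one']

lemma smul_sub_q (u : H) (p q : ℍ) : 𝒮.smul u (p - q) = 𝒮.smul u p - 𝒮.smul u q := by
  rw [sub_eq_add_neg, 𝒮.smul_add', smul_neg_q, sub_eq_add_neg]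

lemma inn_zero_right (u : H) : 𝒮.inn u 0 = 0 := by
  have h := 𝒮.inn_add_right u 0 0
  simpa using (add_right_injective (𝒮.inn u 0) (by simpa using h.symm))

lemma inn_zero_left (u : H) : 𝒮.inn 0 u = 0 := by
  rw [𝒮.inn_conj, inn_zero_right, star_zero]

lemma inn_add_left (u v w : H) : 𝒮.inn (u + v) w = 𝒮.inn u w + 𝒮.inn v w := by
  rw [𝒮.inn_conj, 𝒮.inn_add_right, star_add, ← 𝒮.inn_conj, ← 𝒮.inn_conj]

lemma inn_smul_left (u v : H) (q : ℍ) :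
    𝒮.inn (𝒮.smul u q) v = star q * 𝒮.inn u v := by
  rw [𝒮.inn_conj, 𝒮.inn_smul_right, star_mul, ← 𝒮.inn_conj]

lemma inn_neg_left (u v : H) : 𝒮.inn (-u) v = -𝒮.inn u v := by
  have := inn_add_left 𝒮 u (-u) v
  rw [add_neg_cancel, inn_zero_left] at this
  exact eq_neg_of_add_eq_zero_right this.symm

lemma inn_neg_right (u v : H) : 𝒮.inn u (-v) = -𝒮.inn u v := by
  have := 𝒮.inn_add_right u v (-v)
  rw [add_neg_cancel, inn_zero_right] at this
  exact eq_neg_of_add_eq_zero_right this.symm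

lemma inn_sub_right (u v w : H) : 𝒮.inn u (v - w) = 𝒮.inn u v - 𝒮.inn u w := by
  rw [sub_eq_add_neg, 𝒮.inn_add_right, inn_neg_right, sub_eq_add_neg]

lemma inn_self_re_nonneg (u : H) : 0 ≤ (𝒮.inn u u).re := by
  rw [← 𝒮.norm_sq']; positivity

lemma norm_smul_q (u : H) (q : ℍ) : ‖𝒮.smul u q‖ = ‖q‖ * ‖u‖ := by
  have h2 : ‖𝒮.smul u q‖ ^ 2 = (‖q‖ * ‖u‖) ^ 2 := by
    rw [𝒮.norm_sq', inn_smul_left, 𝒮.inn_smul_right, 𝒮.inn_self_real u,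
      Quaternion.coe_commutes, ← mul_assoc, Quaternion.star_mul_self, ← Quaternion.coe_mul,
      Quaternion.re_coe, mul_pow, ← norm_q_sq, ← 𝒮.norm_sq']
  have := congrArg Real.sqrt h2
  rwa [Real.sqrt_sq (norm_nonneg _), Real.sqrt_sq (by positivity)] at this

end QHSAux

open QHSAux

/-- The complex scalar module structure. -/
def QHS.cModule : Module ℂ H where
  smul c u := 𝒮.smul u (cq c)
  one_smul u := by show 𝒮.smul u (cq 1) = u; rw [cq_one, 𝒮.smul_one']
  mul_smul c d u := by
    show 𝒮.smul u (cq (c * d)) = 𝒮.smul (𝒮.smul u (cq d)) (cq c)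
    rw [← 𝒮.smul_mul', ← cq_mul, mul_comm]
  smul_zero c := by show 𝒮.smul 0 (cq c) = 0; exact zero_smul_q 𝒮 _
  smul_add c u v := by show 𝒮.smul (u + v) _ = 𝒮.smul u _ + 𝒮.smul v _; rw [𝒮.add_smul']
  add_smul c d u := by
    show 𝒮.smul u (cq (c + d)) = 𝒮.smul u (cq c) + 𝒮.smul u (cq d)
    rw [cq_add, 𝒮.smul_add']
  zero_smul u := by show 𝒮.smul u (cq 0) = 0; rw [cq_zero]; exact smul_zero_q 𝒮 u

lemma QHS.csmul_def (c : ℂ) (u : H) :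
    (letI := 𝒮.cModule; c • u) = 𝒮.smul u (cq c) := rfl

lemma norm_cq (c : ℂ) : ‖cq c‖ = ‖c‖ := by
  have h2 : ‖cq c‖ ^ 2 = ‖c‖ ^ 2 := by
    rw [norm_q_sq, Quaternion.normSq_def', Complex.sq_norm]
    simp [cq, Complex.normSq_apply]
    ring
  have := congrArg Real.sqrt h2
  rwa [Real.sqrt_sq (norm_nonneg _), Real.sqrt_sq (norm_nonneg _)] at this

/-- The complex normed space structure. -/
def QHS.cNormedSpace : letI := 𝒮.cModule; NormedSpace ℂ H :=
  letI := 𝒮.cModule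
  { norm_smul_le := fun c u => by
      rw [𝒮.csmul_def, norm_smul_q, norm_cq] }

/-- The complex inner product. -/
def QHS.cInner : Inner ℂ H := ⟨fun u v => qc (𝒮.inn u v)⟩

/-- The complex Hilbert space structure induced by a quaternionic structure. -/
noncomputable def QHS.cIPS : letI := 𝒮.cModule; letI := 𝒮.cNormedSpace; InnerProductSpace ℂ H :=
  letI := 𝒮.cModule
  letI := 𝒮.cNormedSpace
  { toNormedSpace := 𝒮.cNormedSpace
    toInner := 𝒮.cInner
    norm_sq_eq_re_inner := fun u => by
      show ‖u‖ ^ 2 = (qc (𝒮.inn u u)).re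
      rw [qc_re, 𝒮.norm_sq']
    conj_inner_symm := fun u v => by
      show conj (qc (𝒮.inn v u)) = qc (𝒮.inn u v)
      rw [← qc_star, ← 𝒮.inn_conj]
    add_left := fun u v w => by
      show qc (𝒮.inn (u + v) w) = qc (𝒮.inn u w) + qc (𝒮.inn v w)
      rw [inn_add_left, qc_add]
    smul_left := fun u v c => by
      show qc (𝒮.inn (𝒮.smul u (cq c)) v) = conj c * qc (𝒮.inn u v)
      rw [inn_smul_left, ← cq_star, qc_cq_mul] }

end QHSBasic

attribute [reducible] QHS.cModule QHS.cNormedSpace QHS.cInner QHS.cIPS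

lemma prod_inner_apply_fst {E F : Type*} [NormedAddCommGroup E] [InnerProductSpace ℂ E]
    [NormedAddCommGroup F] [InnerProductSpace ℂ F] (x y : WithLp 2 (E × F)) :
    @inner ℂ _ _ x y = @inner ℂ _ _ x.fst y.fst + @inner ℂ _ _ x.snd y.snd := rfl

section Generic

open scoped ComplexConjugate

variable {E : Type*} [NormedAddCommGroup E] [InnerProductSpace ℂ E] [CompleteSpace E]

local notation "⟪" x ", " y "⟫" => @inner ℂ _ _ x y

lemma dense_inner_unique {D : Set E} (hdense : Dense D) {w w' : E}
    (h : ∀ v ∈ D, ⟪w, v⟫ = ⟪w', v⟫) : w = w' := by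
  have hc : Continuous fun v : E => ⟪w - w', v⟫ :=
    continuous_const.inner continuous_id
  have h0 : (fun v : E => ⟪w - w', v⟫) = fun _ => (0 : ℂ) := by
    refine Continuous.ext_on hdense hc continuous_const fun v hv => ?_
    rw [inner_sub_left, h v hv, sub_self]
  have := congrFun h0 (w - w')
  rw [inner_self_eq_zero] at this
  exact sub_eq_zero.mp this

theorem vonNeumannAux (T : E → E) (D : Set E)
    (h0 : (0:E) ∈ D) (hadd : ∀ u ∈ D, ∀ v ∈ D, u + v ∈ D)
    (hsmul : ∀ u ∈ D, ∀ c : ℂ, c • u ∈ D)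
    (hTadd : ∀ u ∈ D, ∀ v ∈ D, T (u + v) = T u + T v)
    (hTsmul : ∀ u ∈ D, ∀ c : ℂ, T (c • u) = c • T u)
    (hclosed : IsClosed {p : E × E | p.1 ∈ D ∧ p.2 = T p.1}) :
    ∃ C : E → E,
      (∀ y, C y ∈ D ∧ (∀ v ∈ D, ⟪y - C y, v⟫ = ⟪T (C y), T v⟫)) ∧
      (∀ z w, z ∈ D → (∀ v ∈ D, ⟪w, v⟫ = ⟪T z, T v⟫) → C (z + w) = z) := by
  classical
  have hT0 : T 0 = 0 := by
    have := hTsmul 0 h0 0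
    simpa using this
  set K := WithLp 2 (E × E) with hK
  let G : Submodule ℂ K :=
    { carrier := {p : K | p.fst ∈ D ∧ p.snd = T p.fst}
      add_mem' := by
        rintro p q ⟨hp1, hp2⟩ ⟨hq1, hq2⟩
        refine ⟨?_, ?_⟩
        · rw [WithLp.add_fst]; exact hadd _ hp1 _ hq1
        · rw [WithLp.add_fst, WithLp.add_snd, hTadd _ hp1 _ hq1, hp2, hq2]
      zero_mem' := by
        refine ⟨?_, ?_⟩
        · rw [WithLp.zero_fst]; exact h0
        · rw [WithLp.zero_fst, WithLp.zero_snd, hT0]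
      smul_mem' := by
        rintro c p ⟨hp1, hp2⟩
        refine ⟨?_, ?_⟩
        · rw [WithLp.smul_fst]; exact hsmul _ hp1 c
        · rw [WithLp.smul_fst, WithLp.smul_snd, hTsmul _ hp1 c, hp2] }
  have hmemG : ∀ p : K, p ∈ G ↔ p.fst ∈ D ∧ p.snd = T p.fst := fun p => Iff.rfl
  have hGclosed : IsClosed (G : Set K) := by
    have : (G : Set K) = (fun p : K => ((p.fst, p.snd) : E × E)) ⁻¹'
        {p : E × E | p.1 ∈ D ∧ p.2 = T p.1} := rfl
    rw [this]
    apply hclosed.preimage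
    exact ((WithLp.prodContinuousLinearEquiv 2 ℂ E E) :
      K →L[ℂ] E × E).continuous
  haveI : CompleteSpace G := hGclosed.completeSpace_coe
  -- the element (y, 0) of K
  let emb : E × E ≃ K := (WithLp.equiv 2 (E × E)).symm
  let C : E → E := fun y => (G.starProjection (emb (y, 0))).fst
  have hproj : ∀ y : E, G.starProjection (emb (y, 0)) ∈ G :=
    fun y => G.starProjection_apply_mem _
  have hres : ∀ y : E, emb (y, 0) - G.starProjection (emb (y, 0)) ∈ Gᗮ :=
    fun y => G.sub_starProjection_mem_orthogonal _
  have hfst : ∀ y : E, (emb (y, 0)).fst = y := fun y => rfl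
  have hsnd : ∀ y : E, (emb (y, 0)).snd = 0 := fun y => rfl
  refine ⟨C, fun y => ?_, fun z w hz hw => ?_⟩
  · obtain ⟨h1, h2⟩ := (hmemG _).mp (hproj y)
    refine ⟨h1, fun v hv => ?_⟩
    have hv' : emb (v, T v) ∈ G := ⟨hv, rfl⟩
    have horth := (hres y) _ hv'
    have e1 : (emb (v, T v)).fst = v := rfl
    have e2 : (emb (v, T v)).snd = T v := rfl
    rw [prod_inner_apply_fst, WithLp.sub_fst, WithLp.sub_snd, hfst, hsnd, h2,
      e1, e2, zero_sub, inner_neg_right] at horth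
    have hx : ⟪v, y - C y⟫ = ⟪T v, T (C y)⟫ := by linear_combination horth
    calc ⟪y - C y, v⟫ = conj ⟪v, y - C y⟫ := (inner_conj_symm _ _).symm
      _ = conj ⟪T v, T (C y)⟫ := by rw [hx]
      _ = ⟪T (C y), T v⟫ := inner_conj_symm _ _
  · have hg : emb (z, T z) ∈ G := ⟨hz, rfl⟩
    have hvo : emb (z + w, 0) - emb (z, T z) ∈ Gᗮ := by
      rw [Submodule.mem_orthogonal]
      rintro p ⟨hp1, hp2⟩
      rw [prod_inner_apply_fst, WithLp.sub_fst, WithLp.sub_snd]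
      have e1 : (emb (z + w, (0:E))).fst = z + w := rfl
      have e2 : (emb (z + w, (0:E))).snd = 0 := rfl
      have e3 : (emb (z, T z)).fst = z := rfl
      have e4 : (emb (z, T z)).snd = T z := rfl
      rw [e1, e2, e3, e4, add_sub_cancel_left, zero_sub, inner_neg_right, hp2]
      have h5 : ⟪p.fst, w⟫ = ⟪T p.fst, T z⟫ := by
        calc ⟪p.fst, w⟫ = conj ⟪w, p.fst⟫ := (inner_conj_symm _ _).symm
          _ = conj ⟪T z, T p.fst⟫ := by rw [hw _ hp1]
          _ = ⟪T p.fst, T z⟫ := inner_conj_symm _ _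
      rw [h5]; ring
    have := Submodule.eq_starProjection_of_mem_orthogonal hg hvo
    show (G.starProjection (emb (z + w, 0))).fst = z
    rw [this]
    rfl

theorem closureSubmoduleAux {K : Type*} [NormedAddCommGroup K] [InnerProductSpace ℂ K]
    [CompleteSpace K] (G M : Submodule ℂ K) (hG : IsClosed (G : Set K)) (hMG : M ≤ G)
    (h : ∀ p ∈ G, (∀ m ∈ M, @inner ℂ _ _ m p = 0) → p = 0) :
    closure (M : Set K) = (G : Set K) := by
  have hMG' : Gᗮ ≤ Mᗮ := Submodule.orthogonal_le hMG
  have horth : Mᗮ = Gᗮ := by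
    refine le_antisymm ?_ hMG'
    intro p hp
    haveI : CompleteSpace G := hG.completeSpace_coe
    have hgmem : G.starProjection p ∈ G := G.starProjection_apply_mem _
    have hres : p - G.starProjection p ∈ Gᗮ := G.sub_starProjection_mem_orthogonal _
    have hg_in : G.starProjection p ∈ Mᗮ := by
      have he : G.starProjection p = p - (p - G.starProjection p) := by abel
      rw [he]
      exact Submodule.sub_mem _ hp (hMG' hres)
    have hg0 : G.starProjection p = 0 :=
      h _ hgmem fun m hm => (Submodule.mem_orthogonal _ _).mp hg_in m hm
    have : p = p - G.starProjection p := by rw [hg0, sub_zero]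
    rw [this]
    exact hres
  calc closure (M : Set K) = (M.topologicalClosure : Set K) :=
        (Submodule.topologicalClosure_coe M).symm
    _ = (Mᗮᗮ : Set K) := by rw [Submodule.orthogonal_orthogonal_eq_closure]
    _ = (Gᗮᗮ : Set K) := by rw [horth]
    _ = (G.topologicalClosure : Set K) := by rw [Submodule.orthogonal_orthogonal_eq_closure]
    _ = closure (G : Set K) := Submodule.topologicalClosure_coe G
    _ = (G : Set K) := hG.closure_eq

set_option synthInstance.maxHeartbeats 1000000 in
set_option maxHeartbeats 2000000 in
theorem sqrtExistsAux (C : E →L[ℂ] E) (hC : C.IsPositive)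
    (J : E → E) (hJadd : ∀ x y, J (x + y) = J x + J y)
    (hJsmul : ∀ (c : ℂ) x, J (c • x) = conj c • J x)
    (hJJ : ∀ x, J (J x) = -x)
    (hJinner : ∀ x y, ⟪J x, J y⟫ = conj ⟪x, y⟫) :
    ∀ hCJ : ∀ x, C (J x) = J (C x),
    ∃ R S : E →L[ℂ] E, R.IsPositive ∧ S.IsPositive ∧ (∀ x, R (J x) = J (R x)) ∧
      (∀ x, S (J x) = J (S x)) ∧ (∀ x, R (R x) = C x) ∧ (∀ x, S (S x) = R x) := by
  intro hCJ
  have hJ0 : J 0 = 0 := by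
    have := hJsmul 0 0
    simpa using this
  have hJneg : ∀ x, J (-x) = -J x := by
    intro x
    have := hJadd x (-x)
    rw [add_neg_cancel, hJ0] at this
    exact eq_neg_of_add_eq_zero_right this.symm
  have hJnorm : ∀ x, ‖J x‖ = ‖x‖ := by
    intro x
    have h1 := congrArg Complex.re (hJinner x x)
    rw [Complex.conj_re] at h1
    have h2 : ‖J x‖ ^ 2 = ‖x‖ ^ 2 := by
      rw [← @inner_self_eq_norm_sq ℂ, ← @inner_self_eq_norm_sq ℂ]
      exact h1
    have := congrArg Real.sqrt h2
    rwa [Real.sqrt_sq (norm_nonneg _), Real.sqrt_sq (norm_nonneg _)] at this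
  have hJleft : ∀ x y, ⟪J x, y⟫ = -conj ⟪x, J y⟫ := by
    intro x y
    have hy : y = -J (J y) := by rw [hJJ, neg_neg]
    calc ⟪J x, y⟫ = ⟪J x, -J (J y)⟫ := by rw [← hy]
      _ = -⟪J x, J (J y)⟫ := by rw [inner_neg_right]
      _ = -conj ⟪x, J y⟫ := by rw [hJinner]
  -- main step : positive square root commuting with J
  have key : ∀ A : E →L[ℂ] E, A.IsPositive → (∀ x, A (J x) = J (A x)) →
      ∃ B : E →L[ℂ] E, B.IsPositive ∧ (∀ x, B (J x) = J (B x)) ∧ ∀ x, B (B x) = A x := by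
    intro A hA hAJ
    have hA0 : 0 ≤ A := (ContinuousLinearMap.nonneg_iff_isPositive A).mpr hA
    set B := CFC.sqrt A with hBdef
    have hB0 : 0 ≤ B := CFC.sqrt_nonneg (a := A)
    have hBP : B.IsPositive := (ContinuousLinearMap.nonneg_iff_isPositive B).mp hB0
    have hBsym : ∀ x y, ⟪B x, y⟫ = ⟪x, B y⟫ :=
      fun x y => hBP.1 x y
    have hBB : B * B = A := CFC.sqrt_mul_sqrt_self A hA0
    have hBBx : ∀ x, B (B x) = A x := fun x => by
      rw [← ContinuousLinearMap.mul_apply, hBB]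
    -- the conjugated operator
    let ψl : E →ₗ[ℂ] E :=
      { toFun := fun u => -J (B (J u))
        map_add' := fun u v => by
          show -J (B (J (u + v))) = -J (B (J u)) + -J (B (J v))
          rw [hJadd, map_add, hJadd, neg_add]
        map_smul' := fun c u => by
          show -J (B (J (c • u))) = c • (-J (B (J u)))
          rw [hJsmul, map_smul, hJsmul, Complex.conj_conj, smul_neg] }
    have hψbound : ∀ u, ‖ψl u‖ ≤ ‖B‖ * ‖u‖ := fun u => by
      show ‖-J (B (J u))‖ ≤ _
      rw [norm_neg, hJnorm, ← hJnorm u]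
      exact B.le_opNorm (J u)
    let ψ : E →L[ℂ] E := ψl.mkContinuous ‖B‖ hψbound
    have hψapp : ∀ u, ψ u = -J (B (J u)) := fun u => rfl
    have hψsym : ∀ x y, ⟪ψ x, y⟫ = ⟪x, ψ y⟫ := by
      intro x y
      calc ⟪ψ x, y⟫ = -⟪J (B (J x)), y⟫ := by rw [hψapp, inner_neg_left]
        _ = conj ⟪B (J x), J y⟫ := by rw [hJleft, neg_neg]
        _ = conj ⟪J x, B (J y)⟫ := by rw [hBsym]
        _ = -⟪x, J (B (J y))⟫ := by rw [hJleft x (B (J y)), map_neg, Complex.conj_conj]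
        _ = ⟪x, ψ y⟫ := by rw [hψapp, inner_neg_right]
    have hψsa : IsSelfAdjoint ψ := ContinuousLinearMap.isSelfAdjoint_iff_isSymmetric.mpr fun x y => hψsym x y
    have hψpos : ∀ x, 0 ≤ ψ.reApplyInnerSelf x := by
      intro x
      have h1 : ⟪ψ x, x⟫ = conj ⟪B (J x), J x⟫ := by
        rw [hψapp, inner_neg_left, hJleft, neg_neg]
      show 0 ≤ RCLike.re ⟪ψ x, x⟫
      rw [h1]
      exact hBP.2 (J x)
    have hψψ : ψ * ψ = A := by
      ext x
      show ψ (ψ x) = A x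
      rw [hψapp, hψapp, hJneg, hJJ, neg_neg, hBBx, hAJ, hJJ, neg_neg]
    have hψ0 : 0 ≤ ψ := (ContinuousLinearMap.nonneg_iff_isPositive ψ).mpr ⟨ContinuousLinearMap.isSelfAdjoint_iff_isSymmetric.mp hψsa, hψpos⟩
    have hBψ : B = ψ := by rw [hBdef, CFC.sqrt_unique hψψ hψ0]
    have hBJ : ∀ x, B (J x) = J (B x) := by
      intro x
      have h1 : B (J x) = ψ (J x) := by rw [hBψ]
      rw [h1, hψapp, hJJ, map_neg, hJneg, neg_neg]
    exact ⟨B, hBP, hBJ, hBBx⟩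
  obtain ⟨R, hRP, hRJ, hRR⟩ := key C hC hCJ
  obtain ⟨S, hSP, hSJ, hSS⟩ := key R hRP hRJ
  exact ⟨R, S, hRP, hSP, hRJ, hSJ, hRR, hSS⟩

end Generic

open QHSAux

/-- For a closed densely defined operator `T`, the operator
`C_T = (1 + T*T)⁻¹` is a well-defined positive bounded operator with range `D(T*T)`,
`Z_T = T √(C_T)` is everywhere defined and bounded with `‖Z_T‖ ≤ 1`,
`1 - Z_T* Z_T = C_T`, `Ran √(C_T)` is a core for `T`, and
`T` is the closure of `Z_T (√(1 - Z_T* Z_T))⁻¹`. -/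
theorem bounded_transform_properties
    {H : Type} [NormedAddCommGroup H] [CompleteSpace H] (𝒮 : QHS H)
    (T : H → H) (D : Set H)
    (hD : 𝒮.IsSubspace D) (hdense : Dense D) (hlin : 𝒮.RightLinearOn T D)
    (hclosed : ClosedOp T D) :
    ∃ C : H → H,
      -- (a) C = (1 + T*T)⁻¹ is well defined, bounded, positive, with range D(T*T)
      𝒮.RightLinear C ∧ BoundedOp C ∧ 𝒮.PositiveOp C ∧ 𝒮.SelfAdjointOp C ∧
      (∀ y : H, C y ∈ D ∧ T (C y) ∈ 𝒮.adjDom T D ∧ C y + 𝒮.adjOp T D (T (C y)) = y) ∧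
      (∀ u ∈ D, T u ∈ 𝒮.adjDom T D → C (u + 𝒮.adjOp T D (T u)) = u) ∧
      (C '' Set.univ = {u ∈ D | T u ∈ 𝒮.adjDom T D}) ∧
      -- (b) properties of Z_T = T √(C_T)
      ((∀ u : H, 𝒮.posSqrt C u ∈ D) ∧
        (∀ u : H, ‖T (𝒮.posSqrt C u)‖ ≤ 1 * ‖u‖) ∧
        -- 1 - Z_T* Z_T = C_T
        (∀ Zs : H → H, 𝒮.AdjointPair (fun u => T (𝒮.posSqrt C u)) Zs →
          ∀ u : H, u - Zs (T (𝒮.posSqrt C u)) = C u) ∧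
        -- Ran(√C) is a core for T, i.e. T = closure of Z_T (√(1 - Z_T*Z_T))⁻¹
        closure (graphOf T (𝒮.posSqrt C '' Set.univ)) = graphOf T D) := by
  classical
  letI := 𝒮.cModule
  letI := 𝒮.cNormedSpace
  letI := 𝒮.cIPS
  -- basic translations
  have hinner : ∀ u v : H, (inner ℂ u v : ℂ) = qc (𝒮.inn u v) := fun _ _ => rfl
  have hsmulc : ∀ (c : ℂ) (u : H), c • u = 𝒮.smul u (cq c) := fun _ _ => rfl
  set J : H → H := fun u => 𝒮.smul u jq with hJdef
  have hJadd : ∀ x y : H, J (x + y) = J x + J y := fun x y => 𝒮.add_smul' x y jq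
  have hJsmul : ∀ (c : ℂ) (x : H), J (c • x) = (starRingEnd ℂ) c • J x := by
    intro c x
    show 𝒮.smul (𝒮.smul x (cq c)) jq = 𝒮.smul (𝒮.smul x jq) (cq ((starRingEnd ℂ) c))
    rw [← 𝒮.smul_mul', ← 𝒮.smul_mul', ← cq_mul_jq]
  have hJJ : ∀ x : H, J (J x) = -x := by
    intro x
    show 𝒮.smul (𝒮.smul x jq) jq = -x
    rw [← 𝒮.smul_mul', jq_mul_jq, smul_neg_one]
  have hJinner : ∀ x y : H, (inner ℂ (J x) (J y) : ℂ) = (starRingEnd ℂ) (inner ℂ x y) := by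
    intro x y
    rw [hinner, hinner]
    show qc (𝒮.inn (𝒮.smul x jq) (𝒮.smul y jq)) = _
    rw [inn_smul_left, 𝒮.inn_smul_right, qc_conjj]
  -- smul decomposition through complex scalars and J
  have hdecomp : ∀ (u : H) (q : ℍ),
      𝒮.smul u q = (⟨q.re, q.imI⟩ : ℂ) • u + J ((⟨q.imJ, q.imK⟩ : ℂ) • u) := by
    intro u q
    show _ = 𝒮.smul u (cq ⟨q.re, q.imI⟩) + 𝒮.smul (𝒮.smul u (cq ⟨q.imJ, q.imK⟩)) jq
    rw [← 𝒮.smul_mul', ← 𝒮.smul_add']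
    exact congrArg _ (cq_qc_jq q)
  have hequiv : ∀ A : H → H, (∀ x y : H, A (x + y) = A x + A y) →
      (∀ (c : ℂ) (x : H), A (c • x) = c • A x) → (∀ x, A (J x) = J (A x)) →
      ∀ (u : H) (q : ℍ), A (𝒮.smul u q) = 𝒮.smul (A u) q := by
    intro A ha hs hj u q
    rw [hdecomp u q, ha, hs, hj, hs]
    exact (hdecomp (A u) q).symm
  -- adjoint condition translation
  have hAdj : ∀ u w : H, (∀ v ∈ D, (inner ℂ w v : ℂ) = inner ℂ u (T v)) ↔
      (∀ v ∈ D, 𝒮.inn w v = 𝒮.inn u (T v)) := by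
    intro u w
    constructor
    · intro h v hv
      apply quat_ext_of_qc
      · rw [← hinner, ← hinner]; exact h v hv
      · have hJv : J v ∈ D := hD.2.2 v hv jq
        have h2 := h (J v) hJv
        rw [hinner, hinner, hlin.2 v hv jq] at h2
        show qc (𝒮.inn w v * jq) = qc (𝒮.inn u (T v) * jq)
        rw [← 𝒮.inn_smul_right, ← 𝒮.inn_smul_right]
        exact h2
    · intro h v hv
      rw [hinner, hinner, h v hv]
  -- adjOp basic lemmas
  have hWuniq : ∀ w w' : H, (∀ v ∈ D, 𝒮.inn w v = 𝒮.inn w' v) → w = w' := by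
    intro w w' h
    apply dense_inner_unique hdense
    intro v hv
    rw [hinner, hinner, h v hv]
  have hadjOp_spec : ∀ u : H, u ∈ 𝒮.adjDom T D →
      ∀ v ∈ D, 𝒮.inn (𝒮.adjOp T D u) v = 𝒮.inn u (T v) := by
    intro u hu
    have hu' : ∃ w : H, ∀ v ∈ D, 𝒮.inn w v = 𝒮.inn u (T v) := hu
    show ∀ v ∈ D, 𝒮.inn (QHS.adjOp 𝒮 T D u) v = 𝒮.inn u (T v)
    unfold QHS.adjOp
    rw [dif_pos hu']
    exact hu'.choose_spec
  have hadjOp_val : ∀ u w : H, (∀ v ∈ D, 𝒮.inn w v = 𝒮.inn u (T v)) →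
      𝒮.adjOp T D u = w := by
    intro u w h
    have hu : u ∈ 𝒮.adjDom T D := ⟨w, h⟩
    exact hWuniq _ _ fun v hv => by rw [hadjOp_spec u hu v hv, ← h v hv]
  -- von Neumann
  obtain ⟨C, hC1, hC2⟩ := vonNeumannAux T D hD.1 hD.2.1
    (fun u hu c => hD.2.2 u hu (cq c)) hlin.1 (fun u hu c => hlin.2 u hu (cq c)) hclosed
  have hCD : ∀ y : H, C y ∈ D := fun y => (hC1 y).1
  have hCadjC : ∀ y : H, ∀ v ∈ D, (inner ℂ (y - C y) v : ℂ) = inner ℂ (T (C y)) (T v) :=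
    fun y => (hC1 y).2
  have hCadjQ : ∀ y : H, ∀ v ∈ D, 𝒮.inn (y - C y) v = 𝒮.inn (T (C y)) (T v) :=
    fun y => (hAdj (T (C y)) (y - C y)).mp (hCadjC y)
  have hTCdom : ∀ y : H, T (C y) ∈ 𝒮.adjDom T D := fun y => ⟨y - C y, hCadjQ y⟩
  have hadjTC : ∀ y : H, 𝒮.adjOp T D (T (C y)) = y - C y := fun y =>
    hadjOp_val _ _ (hCadjQ y)
  have hCeq : ∀ y : H, C y + 𝒮.adjOp T D (T (C y)) = y := by
    intro y; rw [hadjTC]; abel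
  have hCinv : ∀ u ∈ D, T u ∈ 𝒮.adjDom T D → C (u + 𝒮.adjOp T D (T u)) = u := by
    intro u hu hTu
    apply hC2 u _ hu
    exact ((hAdj (T u) (𝒮.adjOp T D (T u))).mpr (hadjOp_spec (T u) hTu))
  -- linearity of C
  have hCadd : ∀ y y' : H, C (y + y') = C y + C y' := by
    intro y y'
    have hz : C y + C y' ∈ D := hD.2.1 _ (hCD y) _ (hCD y')
    have hTz : T (C y + C y') = T (C y) + T (C y') := hlin.1 _ (hCD y) _ (hCD y')
    have hw : ∀ v ∈ D, 𝒮.inn (𝒮.adjOp T D (T (C y)) + 𝒮.adjOp T D (T (C y'))) v =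
        𝒮.inn (T (C y + C y')) (T v) := by
      intro v hv
      rw [inn_add_left, hadjOp_spec _ (hTCdom y) v hv, hadjOp_spec _ (hTCdom y') v hv,
        hTz, inn_add_left]
    have := hC2 _ _ hz ((hAdj _ _).mpr hw)
    calc C (y + y') = C ((C y + 𝒮.adjOp T D (T (C y))) + (C y' + 𝒮.adjOp T D (T (C y')))) := by
          rw [hCeq, hCeq]
      _ = C ((C y + C y') + (𝒮.adjOp T D (T (C y)) + 𝒮.adjOp T D (T (C y')))) := by
          congr 1
          abel
      _ = C y + C y' := this
  have hCsmulq : ∀ (y : H) (q : ℍ), C (𝒮.smul y q) = 𝒮.smul (C y) q := by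
    intro y q
    have hz : 𝒮.smul (C y) q ∈ D := hD.2.2 _ (hCD y) q
    have hTz : T (𝒮.smul (C y) q) = 𝒮.smul (T (C y)) q := hlin.2 _ (hCD y) q
    have hw : ∀ v ∈ D, 𝒮.inn (𝒮.smul (𝒮.adjOp T D (T (C y))) q) v =
        𝒮.inn (T (𝒮.smul (C y) q)) (T v) := by
      intro v hv
      rw [inn_smul_left, hadjOp_spec _ (hTCdom y) v hv, hTz, inn_smul_left]
    have := hC2 _ _ hz ((hAdj _ _).mpr hw)
    calc C (𝒮.smul y q) = C (𝒮.smul (C y + 𝒮.adjOp T D (T (C y))) q) := by rw [hCeq]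
      _ = C (𝒮.smul (C y) q + 𝒮.smul (𝒮.adjOp T D (T (C y))) q) := by rw [𝒮.add_smul']
      _ = 𝒮.smul (C y) q := this
  have hClin : 𝒮.RightLinear C := ⟨hCadd, hCsmulq⟩
  -- master identity
  have hMasterQ : ∀ u v : H,
      𝒮.inn u (C v) = 𝒮.inn (C u) (C v) + 𝒮.inn (T (C u)) (T (C v)) := by
    intro u v
    conv_lhs => rw [← hCeq u]
    rw [inn_add_left, hadjOp_spec _ (hTCdom u) _ (hCD v)]
  have hMasterC : ∀ u v : H,
      (inner ℂ u (C v) : ℂ) = inner ℂ (C u) (C v) + inner ℂ (T (C u)) (T (C v)) := by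
    intro u v
    rw [hinner, hinner, hinner, hMasterQ u v, qc_add]
  -- positivity of C
  have hCpos : 𝒮.PositiveOp C := by
    intro u
    have h1 : 𝒮.inn u (C u) =
        (((𝒮.inn (C u) (C u)).re + (𝒮.inn (T (C u)) (T (C u))).re : ℝ) : ℍ) := by
      conv_lhs => rw [hMasterQ u u, 𝒮.inn_self_real (C u), 𝒮.inn_self_real (T (C u)),
        ← Quaternion.coe_add]
    constructor
    · rw [h1, Quaternion.re_coe]
    · rw [h1, Quaternion.re_coe]
      have := inn_self_re_nonneg 𝒮 (C u)
      have := inn_self_re_nonneg 𝒮 (T (C u))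
      positivity
  -- self-adjointness of C
  have hCsa : 𝒮.SelfAdjointOp C := by
    intro u v
    have h1 : 𝒮.inn (C u) v = 𝒮.inn (C u) (C v) + 𝒮.inn (T (C u)) (T (C v)) := by
      conv_lhs => rw [← hCeq v]
      rw [𝒮.inn_add_right]
      congr 1
      rw [𝒮.inn_conj, hadjOp_spec _ (hTCdom v) _ (hCD u), 𝒮.inn_conj, star_star]
    rw [h1, ← hMasterQ u v]
  -- boundedness
  have hsq : ∀ y : H, ‖C y‖ ^ 2 + ‖T (C y)‖ ^ 2 = Complex.re (inner ℂ y (C y) : ℂ) := by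
    intro y
    rw [hMasterC y y]
    have e1 : Complex.re (inner ℂ (C y) (C y) : ℂ) = ‖C y‖ ^ 2 := by
      rw [hinner, qc_re, ← 𝒮.norm_sq']
    have e2 : Complex.re (inner ℂ (T (C y)) (T (C y)) : ℂ) = ‖T (C y)‖ ^ 2 := by
      rw [hinner, qc_re, ← 𝒮.norm_sq']
    rw [Complex.add_re, e1, e2]
  have hCposC : ∀ y : H, 0 ≤ Complex.re (inner ℂ y (C y) : ℂ) := by
    intro y
    rw [hinner, qc_re]
    exact (hCpos y).2
  have hCnorm : ∀ y : H, ‖C y‖ ≤ ‖y‖ := by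
    intro y
    have h1 : ‖C y‖ ^ 2 ≤ Complex.re (inner ℂ y (C y) : ℂ) := by
      have := sq_nonneg ‖T (C y)‖
      have := hsq y
      linarith
    have h2 : Complex.re (inner ℂ y (C y) : ℂ) ≤ ‖y‖ * ‖C y‖ := by
      calc Complex.re (inner ℂ y (C y) : ℂ) ≤ ‖(inner ℂ y (C y) : ℂ)‖ := Complex.re_le_norm _
        _ ≤ ‖y‖ * ‖C y‖ := norm_inner_le_norm _ _
    nlinarith [norm_nonneg (C y), norm_nonneg y]
  have hCbdd : BoundedOp C := ⟨1, fun y => by rw [one_mul]; exact hCnorm y⟩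
  -- range
  have hrange : C '' Set.univ = {u ∈ D | T u ∈ 𝒮.adjDom T D} := by
    ext u
    constructor
    · rintro ⟨y, -, rfl⟩
      exact ⟨hCD y, hTCdom y⟩
    · rintro ⟨hu, hTu⟩
      exact ⟨u + 𝒮.adjOp T D (T u), Set.mem_univ _, hCinv u hu hTu⟩
  -- bundle C as a continuous linear map
  let Cl : H →ₗ[ℂ] H :=
    { toFun := C
      map_add' := hCadd
      map_smul' := fun c u => by
        show C (𝒮.smul u (cq c)) = 𝒮.smul (C u) (cq c)
        exact hCsmulq u (cq c) }
  let Ccl : H →L[ℂ] H := Cl.mkContinuous 1 fun y => by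
    rw [one_mul]; exact hCnorm y
  have hCclapp : ∀ y : H, Ccl y = C y := fun y => rfl
  have hCclP : Ccl.IsPositive := by
    constructor
    · refine fun u v => ?_
      show (inner ℂ (C u) v : ℂ) = inner ℂ u (C v)
      rw [hinner, hinner, hCsa u v]
    · intro x
      show 0 ≤ Complex.re (inner ℂ (C x) x : ℂ)
      rw [hinner, qc_re, 𝒮.inn_conj, Quaternion.re_star]
      exact (hCpos x).2
  have hCJcomm : ∀ x : H, Ccl (J x) = J (Ccl x) := fun x => hCsmulq x jq
  obtain ⟨R, S, hRP, hSP, hRJ, hSJ, hRR, hSS⟩ :=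
    sqrtExistsAux Ccl hCclP J hJadd hJsmul hJJ hJinner hCJcomm
  have hRsym : ∀ x y : H, (inner ℂ (R x) y : ℂ) = inner ℂ x (R y) := fun x y =>
    hRP.1 x y
  have hSsym : ∀ x y : H, (inner ℂ (S x) y : ℂ) = inner ℂ x (S y) := fun x y =>
    hSP.1 x y
  -- quaternionic self-adjointness criterion
  have hsaQ : ∀ A : H → H, (∀ x y : H, (inner ℂ (A x) y : ℂ) = inner ℂ x (A y)) →
      (∀ x, A (J x) = J (A x)) → 𝒮.SelfAdjointOp A := by
    intro A hsym hj u v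
    apply quat_ext_of_qc
    · rw [← hinner, ← hinner]; exact hsym u v
    · show qc (𝒮.inn (A u) v * jq) = qc (𝒮.inn u (A v) * jq)
      rw [← 𝒮.inn_smul_right, ← 𝒮.inn_smul_right, ← hinner, ← hinner]
      show (inner ℂ (A u) (J v) : ℂ) = inner ℂ u (J (A v))
      rw [hsym u (J v), hj v]
  have hRsaQ : 𝒮.SelfAdjointOp (⇑R) := hsaQ _ hRsym hRJ
  -- quaternionic positivity of R
  have hRinnS : ∀ u : H, 𝒮.inn u (R u) = 𝒮.inn (S u) (S u) := by
    intro u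
    apply quat_ext_of_qc
    · rw [← hinner, ← hinner]
      show (inner ℂ u (R u) : ℂ) = _
      rw [← hSS u, ← hSsym u (S u)]
    · rw [← 𝒮.inn_smul_right, ← 𝒮.inn_smul_right, ← hinner, ← hinner]
      show (inner ℂ u (J (R u)) : ℂ) = inner ℂ (S u) (J (S u))
      rw [← hSS u, ← hSJ (S u), ← hSsym u (J (S u))]
  have hRposQ : 𝒮.PositiveOp (⇑R) := by
    intro u
    rw [hRinnS u]
    refine ⟨𝒮.inn_self_real (S u), inn_self_re_nonneg 𝒮 (S u)⟩
  have hRlin : 𝒮.RightLinear (⇑R) :=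
    ⟨fun u v => map_add R u v,
     fun u q => hequiv (⇑R) (fun x y => map_add R x y) (fun c x => map_smul R c x) hRJ u q⟩
  have hRbdd : BoundedOp (⇑R) := ⟨‖R‖, fun u => R.le_opNorm u⟩
  have hRsq : ∀ u : H, R (R u) = C u := fun u => hRR u
  -- the chosen square root
  have hex : ∃ P : H → H, 𝒮.RightLinear P ∧ BoundedOp P ∧ 𝒮.PositiveOp P ∧
      𝒮.SelfAdjointOp P ∧ ∀ u : H, P (P u) = C u :=
    ⟨⇑R, hRlin, hRbdd, hRposQ, hRsaQ, hRsq⟩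
  set P : H → H := 𝒮.posSqrt C with hPdef
  have hP : 𝒮.RightLinear P ∧ BoundedOp P ∧ 𝒮.PositiveOp P ∧
      𝒮.SelfAdjointOp P ∧ ∀ u : H, P (P u) = C u := by
    rw [hPdef]
    show (fun Q : H → H => 𝒮.RightLinear Q ∧ BoundedOp Q ∧ 𝒮.PositiveOp Q ∧
      𝒮.SelfAdjointOp Q ∧ ∀ u : H, Q (Q u) = C u) (𝒮.posSqrt C)
    exact Classical.epsilon_spec hex
  obtain ⟨hPlin, hPbdd, hPpos, hPsa, hPP⟩ := hP
  -- properties of P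
  have hPadd : ∀ x y : H, P (x + y) = P x + P y := hPlin.1
  have hPneg : ∀ x : H, P (-x) = -P x := by
    intro x
    have h1 : P (𝒮.smul x (-1)) = 𝒮.smul (P x) (-1) := hPlin.2 x (-1)
    rwa [smul_neg_one, smul_neg_one] at h1
  have hPsub : ∀ x y : H, P (x - y) = P x - P y := by
    intro x y; rw [sub_eq_add_neg, hPadd, hPneg, sub_eq_add_neg]
  have hsqle : ∀ a b : ℝ, 0 ≤ a → 0 ≤ b → a ^ 2 ≤ b ^ 2 → a ≤ b := by
    intro a b ha hb h; nlinarith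
  have hPcont : Continuous P := by
    obtain ⟨Kb, hKb⟩ := hPbdd
    have hlip : LipschitzWith (Real.toNNReal Kb) P := by
      refine LipschitzWith.of_dist_le_mul fun x y => ?_
      rw [dist_eq_norm, dist_eq_norm, ← hPsub]
      calc ‖P (x - y)‖ ≤ Kb * ‖x - y‖ := hKb _
        _ ≤ Real.toNNReal Kb * ‖x - y‖ := by
            have := Real.le_coe_toNNReal Kb
            have := norm_nonneg (x - y)
            nlinarith
    exact hlip.continuous
  have hPsymC : ∀ x y : H, (inner ℂ (P x) y : ℂ) = inner ℂ x (P y) := by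
    intro x y; rw [hinner, hinner, hPsa x y]
  have hPC : ∀ x : H, P (C x) = C (P x) := by
    intro x
    rw [← hPP x]
    exact hPP (P x)
  -- basic facts about T
  have hT0 : T 0 = 0 := by
    have h1 := hlin.2 0 hD.1 0
    rwa [smul_zero_q, smul_zero_q] at h1
  have hTsub : ∀ a ∈ D, ∀ b ∈ D, T (a - b) = T a - T b := by
    intro a ha b hb
    have hnb : -b = 𝒮.smul b (-1) := (smul_neg_one 𝒮 b).symm
    have hbD : -b ∈ D := by rw [hnb]; exact hD.2.2 b hb (-1)
    have h1 : T (-b) = -T b := by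
      rw [hnb, hlin.2 b hb (-1), smul_neg_one]
    rw [sub_eq_add_neg, hlin.1 a ha _ hbD, h1, sub_eq_add_neg]
  have hCsub : ∀ x y : H, C (x - y) = C x - C y := fun x y => map_sub Ccl x y
  have hCcont : Continuous C := Ccl.continuous
  have hadj0 : 𝒮.adjOp T D 0 = 0 :=
    hadjOp_val 0 0 fun v hv => by rw [inn_zero_left, inn_zero_left]
  -- dense range of C
  have hdenseC : Dense (Set.range C) := by
    let RanC : Submodule ℂ H :=
      { carrier := Set.range C
        add_mem' := by rintro _ _ ⟨a, rfl⟩ ⟨b, rfl⟩; exact ⟨a + b, hCadd a b⟩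
        zero_mem' := ⟨0, map_zero Cl⟩
        smul_mem' := by rintro c _ ⟨a, rfl⟩; exact ⟨c • a, hCsmulq a (cq c)⟩ }
    have hbot : RanC.orthogonal = ⊥ := by
      rw [Submodule.eq_bot_iff]
      intro x hx
      have h1 : (inner ℂ (C x) x : ℂ) = 0 := hx (C x) ⟨x, rfl⟩
      have h2 : (inner ℂ x (C x) : ℂ) = 0 := by rw [← inner_conj_symm, h1, map_zero]
      have h3 : ‖C x‖ ^ 2 + ‖T (C x)‖ ^ 2 = 0 := by rw [hsq x, h2]; simp
      have h4 : C x = 0 := by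
        have ha1 : (0:ℝ) ≤ ‖T (C x)‖ ^ 2 := sq_nonneg _
        have ha2 : (0:ℝ) ≤ ‖C x‖ := norm_nonneg _
        have h5 : ‖C x‖ = 0 := by nlinarith
        exact norm_eq_zero.mp h5
      have h6 : T (C x) = 0 := by rw [h4, hT0]
      have h7 := hCeq x
      rw [h6, h4, hadj0, add_zero] at h7
      exact h7.symm
    have htop : RanC.topologicalClosure = ⊤ := Submodule.topologicalClosure_eq_top_iff.mpr hbot
    have hcl : closure (Set.range C) = Set.univ := by
      have h8 := congrArg (fun s : Submodule ℂ H => (s : Set H)) htop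
      simp only [Submodule.topologicalClosure_coe, Submodule.top_coe] at h8
      exact h8
    rw [dense_iff_closure_eq]
    exact hcl
  -- key bound
  have hkey' : ∀ z : H, ‖T (C z)‖ ≤ ‖P z‖ := by
    intro z
    have e1 : (inner ℂ z (C z) : ℂ) = inner ℂ (P z) (P z) := by
      rw [← hPP z, ← hPsymC z (P z)]
    have h1 : Complex.re (inner ℂ z (C z) : ℂ) = ‖P z‖ ^ 2 := by
      rw [e1, hinner, qc_re, ← 𝒮.norm_sq']
    have h2 := hsq z
    refine hsqle _ _ (norm_nonneg _) (norm_nonneg _) ?_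
    have ha1 : (0:ℝ) ≤ ‖C z‖ ^ 2 := sq_nonneg _
    nlinarith
  -- the main limit argument
  have hmain : ∀ v : H, P v ∈ D ∧ ∀ u : H, P u ∈ D →
      (inner ℂ (T (P u)) (T (P v)) : ℂ) = inner ℂ u v - inner ℂ u (C v) := by
    intro v
    have hv : v ∈ closure (Set.range C) := by rw [hdenseC.closure_eq]; trivial
    obtain ⟨φ, hφmem, hφlim⟩ := mem_closure_iff_seq_limit.mp hv
    choose y hy using hφmem
    set a : ℕ → H := fun n => P (φ n) with hadef
    have haC : ∀ n, a n = C (P (y n)) := by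
      intro n
      show P (φ n) = C (P (y n))
      rw [← hy n]
      exact hPC (y n)
    have haD : ∀ n, a n ∈ D := fun n => (haC n) ▸ hCD (P (y n))
    have halim : Filter.Tendsto a Filter.atTop (nhds (P v)) := (hPcont.tendsto v).comp hφlim
    have hTbound : ∀ n m, ‖T (a n) - T (a m)‖ ≤ ‖φ n - φ m‖ := by
      intro n m
      have hTdiff : T (a n) - T (a m) = T (C (P (y n) - P (y m))) := by
        rw [haC n, haC m, ← hTsub _ (hCD _) _ (hCD _), ← hCsub]
      rw [hTdiff]
      calc ‖T (C (P (y n) - P (y m)))‖ ≤ ‖P (P (y n) - P (y m))‖ := hkey' _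
        _ = ‖φ n - φ m‖ := by rw [hPsub, hPP, hPP, hy, hy]
    have hcauchy : CauchySeq fun n => T (a n) := by
      rw [Metric.cauchySeq_iff]
      intro ε hε
      obtain ⟨N, hN⟩ := Metric.cauchySeq_iff.mp hφlim.cauchySeq ε hε
      refine ⟨N, fun m hm n hn => ?_⟩
      have h1 := hN m hm n hn
      rw [dist_eq_norm] at h1 ⊢
      exact lt_of_le_of_lt (hTbound m n) h1
    obtain ⟨w, hw⟩ := cauchySeq_tendsto_of_complete hcauchy
    have hgraph : ((P v, w) : H × H) ∈ graphOf T D := by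
      apply hclosed.mem_of_tendsto (halim.prodMk_nhds hw)
      exact Filter.Eventually.of_forall fun n => ⟨haD n, rfl⟩
    have hPvD : P v ∈ D := hgraph.1
    have hTw : w = T (P v) := hgraph.2
    refine ⟨hPvD, fun u hu => ?_⟩
    have hterm : ∀ n, (inner ℂ (T (P u)) (T (a n)) : ℂ) =
        inner ℂ u (φ n) - inner ℂ u (C (φ n)) := by
      intro n
      have h1 := hCadjC (P (y n)) (P u) hu
      have h2 : (inner ℂ (T (P u)) (T (a n)) : ℂ) =
          inner ℂ (P u) (P (y n) - C (P (y n))) := by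
        rw [haC n, ← inner_conj_symm, ← h1, inner_conj_symm]
      rw [h2, inner_sub_right]
      congr 1
      · rw [hPsymC u (P (y n)), hPP, hy]
      · rw [← hPC (y n), hPsymC u (P (C (y n))), hPP, hy]
    have hlhs : Filter.Tendsto (fun n => (inner ℂ (T (P u)) (T (a n)) : ℂ)) Filter.atTop
        (nhds (inner ℂ (T (P u)) (T (P v)))) := by
      rw [← hTw]
      exact Filter.Tendsto.inner tendsto_const_nhds hw
    have hrhs : Filter.Tendsto (fun n => (inner ℂ u (φ n) : ℂ) - inner ℂ u (C (φ n)))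
        Filter.atTop (nhds ((inner ℂ u v : ℂ) - inner ℂ u (C v))) :=
      (Filter.Tendsto.inner tendsto_const_nhds hφlim).sub
        (Filter.Tendsto.inner tendsto_const_nhds ((hCcont.tendsto v).comp hφlim))
    have hfe : (fun n => (inner ℂ (T (P u)) (T (a n)) : ℂ)) =
        fun n => (inner ℂ u (φ n) : ℂ) - inner ℂ u (C (φ n)) := funext hterm
    exact tendsto_nhds_unique (hfe ▸ hlhs) hrhs
  have hPD : ∀ u : H, P u ∈ D := fun u => (hmain u).1
  have hid : ∀ u v : H, (inner ℂ (T (P u)) (T (P v)) : ℂ) = inner ℂ u v - inner ℂ u (C v) :=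
    fun u v => (hmain v).2 u (hPD u)
  -- conclusion (b2)
  have hb2 : ∀ u : H, ‖T (P u)‖ ≤ 1 * ‖u‖ := by
    intro u
    rw [one_mul]
    refine hsqle _ _ (norm_nonneg _) (norm_nonneg _) ?_
    have h1 := congrArg Complex.re (hid u u)
    have h2 : Complex.re (inner ℂ (T (P u)) (T (P u)) : ℂ) = ‖T (P u)‖ ^ 2 := by
      rw [hinner, qc_re, ← 𝒮.norm_sq']
    have h3 : Complex.re (inner ℂ u u : ℂ) = ‖u‖ ^ 2 := by
      rw [hinner, qc_re, ← 𝒮.norm_sq']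
    have h4 : 0 ≤ Complex.re (inner ℂ u (C u) : ℂ) := hCposC u
    rw [Complex.sub_re] at h1
    linarith
  -- conclusion (b3)
  have hb3 : ∀ Zs : H → H, 𝒮.AdjointPair (fun u => T (P u)) Zs →
      ∀ u : H, u - Zs (T (P u)) = C u := by
    intro Zs hZs u
    have key : ∀ t : H, (inner ℂ (u - Zs (T (P u)) - C u) t : ℂ) = 0 := by
      intro t
      have h1 : (inner ℂ (Zs (T (P u))) t : ℂ) = inner ℂ (T (P u)) (T (P t)) := by
        rw [hinner, hinner]
        exact congrArg qc (hZs (T (P u)) t)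
      have h4 : (inner ℂ u (C t) : ℂ) = inner ℂ (C u) t := by
        rw [hinner, hinner, ← hCsa u t]
      have h2 : (inner ℂ (C u) t : ℂ) = inner ℂ u t - inner ℂ (T (P u)) (T (P t)) := by
        have h3 := hid u t
        rw [← h4]
        linear_combination h3
      rw [inner_sub_left, inner_sub_left, h1, h2]
      ring
    have h5 := key (u - Zs (T (P u)) - C u)
    rw [inner_self_eq_zero] at h5
    exact sub_eq_zero.mp h5
  -- conclusion (b4)
  have hb4 : closure (graphOf T (P '' Set.univ)) = graphOf T D := by
    apply Set.Subset.antisymm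
    · apply closure_minimal _ hclosed
      rintro ⟨p1, p2⟩ ⟨⟨x, -, rfl⟩, h2⟩
      exact ⟨hPD x, h2⟩
    · set K := WithLp 2 (H × H) with hKdef
      let G : Submodule ℂ K :=
        { carrier := {p : K | p.fst ∈ D ∧ p.snd = T p.fst}
          add_mem' := by
            rintro p q ⟨hp1, hp2⟩ ⟨hq1, hq2⟩
            refine ⟨?_, ?_⟩
            · rw [WithLp.add_fst]; exact hD.2.1 _ hp1 _ hq1
            · rw [WithLp.add_fst, WithLp.add_snd, hlin.1 _ hp1 _ hq1, hp2, hq2]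
          zero_mem' := by
            refine ⟨?_, ?_⟩
            · rw [WithLp.zero_fst]; exact hD.1
            · rw [WithLp.zero_fst, WithLp.zero_snd, hT0]
          smul_mem' := by
            rintro c p ⟨hp1, hp2⟩
            refine ⟨?_, ?_⟩
            · rw [WithLp.smul_fst]; exact hD.2.2 _ hp1 (cq c)
            · rw [WithLp.smul_fst, WithLp.smul_snd, hp2]
              exact (hlin.2 _ hp1 (cq c)).symm }
      let M : Submodule ℂ K :=
        { carrier := {p : K | ∃ y : H, p.fst = C y ∧ p.snd = T (C y)}
          add_mem' := by
            rintro p q ⟨yp, hp1, hp2⟩ ⟨yq, hq1, hq2⟩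
            refine ⟨yp + yq, ?_, ?_⟩
            · rw [WithLp.add_fst, hp1, hq1, hCadd]
            · rw [WithLp.add_snd, hp2, hq2, hCadd, ← hlin.1 _ (hCD yp) _ (hCD yq)]
          zero_mem' := by
            refine ⟨0, ?_, ?_⟩
            · rw [WithLp.zero_fst]
              exact (map_zero Cl).symm
            · rw [WithLp.zero_snd]
              have : C (0 : H) = 0 := map_zero Cl
              rw [this, hT0]
          smul_mem' := by
            rintro c p ⟨yp, hp1, hp2⟩
            refine ⟨c • yp, ?_, ?_⟩
            · rw [WithLp.smul_fst, hp1]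
              exact (hCsmulq yp (cq c)).symm
            · rw [WithLp.smul_snd, hp2]
              have e1 : C (c • yp) = c • C yp := hCsmulq yp (cq c)
              rw [e1]
              exact (hlin.2 _ (hCD yp) (cq c)).symm }
      have hGclosed : IsClosed (G : Set K) := by
        have he : (G : Set K) = (fun p : K => ((p.fst, p.snd) : H × H)) ⁻¹' (graphOf T D) := rfl
        rw [he]
        exact hclosed.preimage ((WithLp.prodContinuousLinearEquiv 2 ℂ H H :
          K →L[ℂ] H × H).continuous)
      have hMG : M ≤ G := by
        rintro p ⟨y, h1, h2⟩
        exact ⟨h1 ▸ hCD y, by rw [h2, h1]⟩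
      have hperp : ∀ p ∈ G, (∀ m ∈ M, (inner ℂ m p : ℂ) = 0) → p = 0 := by
        rintro p ⟨hp1, hp2⟩ hm
        have hz : ∀ y : H, (inner ℂ y p.fst : ℂ) = 0 := by
          intro y
          have hmem : ((WithLp.equiv 2 (H × H)).symm (C y, T (C y))) ∈ M := ⟨y, rfl, rfl⟩
          have h1 := hm _ hmem
          rw [prod_inner_apply_fst] at h1
          have e1 : ((WithLp.equiv 2 (H × H)).symm (C y, T (C y))).fst = C y := rfl
          have e2 : ((WithLp.equiv 2 (H × H)).symm (C y, T (C y))).snd = T (C y) := rfl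
          rw [e1, e2, hp2] at h1
          have h3 := hCadjC y p.fst hp1
          rw [← h3, inner_sub_left] at h1
          linear_combination h1
        have hfst : p.fst = 0 := by
          have h6 := hz p.fst
          rwa [inner_self_eq_zero] at h6
        have hsnd : p.snd = 0 := by rw [hp2, hfst, hT0]
        have hp0 : p = (WithLp.equiv 2 (H × H)).symm (p.fst, p.snd) := rfl
        rw [hp0, hfst, hsnd]
        rfl
      have hclosureM := closureSubmoduleAux G M hGclosed hMG hperp
      let e := WithLp.prodContinuousLinearEquiv 2 ℂ H H
      have himg : e '' (M : Set K) ⊆ graphOf T (P '' Set.univ) := by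
        rintro _ ⟨p, ⟨y, h1, h2⟩, rfl⟩
        refine ⟨⟨P y, Set.mem_univ _, ?_⟩, ?_⟩
        · show P (P y) = (e p).1
          rw [hPP y]
          exact h1.symm
        · show (e p).2 = T (e p).1
          have e1 : (e p).1 = p.fst := rfl
          have e2 : (e p).2 = p.snd := rfl
          rw [e1, e2, h2, h1]
      have hEG : e '' (G : Set K) = graphOf T D := by
        ext pr
        constructor
        · rintro ⟨p, hp, rfl⟩
          exact hp
        · intro h
          exact ⟨(WithLp.equiv 2 (H × H)).symm pr, h, rfl⟩
      have htrans : graphOf T D = closure (e '' (M : Set K)) := by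
        rw [← hEG, ← hclosureM]
        have h9 := Homeomorph.image_closure e.toHomeomorph (M : Set K)
        rw [ContinuousLinearEquiv.coe_toHomeomorph] at h9
        exact h9
      rw [htrans]
      exact closure_mono himg
  rw [hPdef] at hPD hb2 hb3 hb4
  exact ⟨C, hClin, hCbdd, hCpos, hCsa, fun y => ⟨hCD y, hTCdom y, hCeq y⟩, hCinv, hrange,
    hPD, hb2, hb3, hb4⟩
end

section
/- Let P be a quaternionic projection-valued measure over ℂ_ι⁺ in a quaternionic Hilbert space H, and let 𝓛 : q ↦ L_q be a left scalar multiplication of H commuting with P. For every simple function s = Σ_{ℓ=1}^n S_ℓ χ_{E_ℓ} with S_ℓ ∈ ℍ and pairwise disjoint Borel sets E_ℓ, the operator ∫ s dP := Σ_ℓ L_{S_ℓ} P(E_ℓ) satisfies ‖∫ s dP‖ = ‖s‖_∞^{(P)}, where ‖s‖_∞^{(P)} := inf{k ≥ 0 : P({|s| > k}) = 0}. -/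
section AuxLemmas

private lemma sq_le_imp {a b : ℝ} (hb : 0 ≤ b) (h : a ^ 2 ≤ b ^ 2) : a ≤ b := by nlinarith

private lemma quat_re_le_norm (x : ℍ) : x.re ≤ ‖x‖ := by
  have h1 : x.re ^ 2 ≤ ‖x‖ ^ 2 := by
    have h2 : Quaternion.normSq x = ‖x‖ * ‖x‖ := Quaternion.normSq_eq_norm_mul_self x
    have h3 := Quaternion.normSq_def' x
    nlinarith [sq_nonneg x.imI, sq_nonneg x.imJ, sq_nonneg x.imK]
  exact sq_le_imp (norm_nonneg x) h1

private lemma quat_star_mul_self (x : ℍ) : star x * x = ((‖x‖ ^ 2 : ℝ) : ℍ) := by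
  rw [Quaternion.star_mul_self, Quaternion.normSq_eq_norm_mul_self, sq]

namespace QHS

variable {H : Type} [NormedAddCommGroup H] (𝒮 : QHS H)

lemma inn_zero_right' (u : H) : 𝒮.inn u 0 = 0 := by
  have h := 𝒮.inn_add_right u 0 0
  rw [add_zero] at h
  exact (left_eq_add.mp h)

lemma inn_zero_left' (u : H) : 𝒮.inn 0 u = 0 := by
  rw [𝒮.inn_conj, 𝒮.inn_zero_right', star_zero]

lemma inn_add_left' (u v w : H) : 𝒮.inn (u + v) w = 𝒮.inn u w + 𝒮.inn v w := by
  rw [𝒮.inn_conj, 𝒮.inn_add_right, star_add, ← 𝒮.inn_conj, ← 𝒮.inn_conj]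

lemma smul_zero'' (u : H) : 𝒮.smul u 0 = 0 := by
  have h := 𝒮.smul_add' u 0 0
  rw [add_zero] at h
  exact (left_eq_add.mp h)

lemma zero_smul'' (q : ℍ) : 𝒮.smul 0 q = 0 := by
  have h := 𝒮.add_smul' 0 0 q
  rw [add_zero] at h
  exact (left_eq_add.mp h)

lemma inn_smul_left' (u v : H) (q : ℍ) :
    𝒮.inn (𝒮.smul u q) v = star q * 𝒮.inn u v := by
  rw [𝒮.inn_conj, 𝒮.inn_smul_right, star_mul, ← 𝒮.inn_conj]

lemma re_inn_self (u : H) : (𝒮.inn u u).re = ‖u‖ ^ 2 := (𝒮.norm_sq' u).symm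

lemma inn_self_eq (u : H) : 𝒮.inn u u = ((‖u‖ ^ 2 : ℝ) : ℍ) := by
  rw [𝒮.inn_self_real u, 𝒮.re_inn_self]

/-- Cauchy–Schwarz inequality. -/
lemma norm_inn_le (u v : H) : ‖𝒮.inn u v‖ ≤ ‖u‖ * ‖v‖ := by
  by_cases hv : v = 0
  · rw [hv, 𝒮.inn_zero_right', norm_zero]
    positivity
  have hv' : 0 < ‖v‖ := norm_pos_iff.mpr hv
  set q : ℍ := 𝒮.inn u v with hq
  have key : ∀ t : ℍ, 0 ≤ ‖u‖ ^ 2 + 2 * (q * t).re + ‖v‖ ^ 2 * ‖t‖ ^ 2 := by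
    intro t
    have h0 : (0 : ℝ) ≤ ‖u + 𝒮.smul v t‖ ^ 2 := sq_nonneg _
    rw [𝒮.norm_sq'] at h0
    have e1 : 𝒮.inn (u + 𝒮.smul v t) (u + 𝒮.smul v t)
        = 𝒮.inn u u + q * t + (star t * star q + star t * (((‖v‖ ^ 2 : ℝ) : ℍ) * t)) := by
      rw [𝒮.inn_add_left', 𝒮.inn_add_right, 𝒮.inn_add_right, 𝒮.inn_smul_right,
        𝒮.inn_smul_left', 𝒮.inn_smul_left', 𝒮.inn_smul_right, 𝒮.inn_self_eq, 𝒮.inn_self_eq,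
        𝒮.inn_conj v u, ← hq]
    rw [e1] at h0
    have e2 : (star t * star q).re = (q * t).re := by
      rw [← star_mul, Quaternion.re_star]
    have e3 : (star t * (((‖v‖ ^ 2 : ℝ) : ℍ) * t)).re = ‖v‖ ^ 2 * ‖t‖ ^ 2 := by
      rw [← mul_assoc, ← Quaternion.coe_commutes, mul_assoc, quat_star_mul_self,
        ← Quaternion.coe_mul, Quaternion.re_coe]
    simp only [Quaternion.re_add, e2, e3, 𝒮.re_inn_self] at h0
    linarith
  have hK := key (-(star q * ((1 / ‖v‖ ^ 2 : ℝ) : ℍ)))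
  have e4 : (q * -(star q * ((1 / ‖v‖ ^ 2 : ℝ) : ℍ))).re = -(‖q‖ ^ 2 * (1 / ‖v‖ ^ 2)) := by
    rw [mul_neg, ← mul_assoc, Quaternion.self_mul_star, ← Quaternion.coe_mul,
      Quaternion.re_neg, Quaternion.re_coe, Quaternion.normSq_eq_norm_mul_self, ← sq]
  have e5 : ‖-(star q * ((1 / ‖v‖ ^ 2 : ℝ) : ℍ))‖ ^ 2 = ‖q‖ ^ 2 * (1 / ‖v‖ ^ 2) ^ 2 := by
    rw [norm_neg, norm_mul, Quaternion.norm_star, Quaternion.norm_coe, mul_pow,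
      Real.norm_eq_abs, sq_abs]
  rw [e4, e5] at hK
  have hq2 : ‖q‖ ^ 2 ≤ (‖u‖ * ‖v‖) ^ 2 := by
    have h5 : (0:ℝ) < ‖v‖ ^ 2 := by positivity
    have h6 : ‖v‖ ^ 2 * (‖q‖ ^ 2 * (1 / ‖v‖ ^ 2) ^ 2) = ‖q‖ ^ 2 * (1 / ‖v‖ ^ 2) := by
      field_simp
    rw [h6] at hK
    have h7 : ‖q‖ ^ 2 * (1 / ‖v‖ ^ 2) ≤ ‖u‖ ^ 2 := by linarith
    calc ‖q‖ ^ 2 = ‖q‖ ^ 2 * (1 / ‖v‖ ^ 2) * ‖v‖ ^ 2 := by field_simp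
    _ ≤ ‖u‖ ^ 2 * ‖v‖ ^ 2 := by nlinarith
    _ = (‖u‖ * ‖v‖) ^ 2 := by ring
  exact sq_le_imp (by positivity) hq2

end QHS
end AuxLemmas
section Aux2

namespace QHS

variable {H : Type} [NormedAddCommGroup H] (𝒮 : QHS H)

/-- `inn v ·` as an additive monoid hom. -/
def innR (v : H) : H →+ ℍ where
  toFun := 𝒮.inn v
  map_zero' := 𝒮.inn_zero_right' v
  map_add' := 𝒮.inn_add_right v

@[simp] lemma innR_apply (v u : H) : 𝒮.innR v u = 𝒮.inn v u := rfl

lemma innR_continuous (v : H) : Continuous (𝒮.innR v) :=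
  AddMonoidHomClass.continuous_of_bound (𝒮.innR v) ‖v‖ fun u => 𝒮.norm_inn_le v u

/-- The real part as an additive monoid hom. -/
def reH : ℍ →+ ℝ where
  toFun := QuaternionAlgebra.re
  map_zero' := rfl
  map_add' := fun _ _ => rfl

/-- Pythagoras for finite orthogonal families. -/
lemma norm_sum_sq {m : ℕ} (v : Fin m → H)
    (h : ∀ i j, i ≠ j → 𝒮.inn (v i) (v j) = 0) :
    ‖∑ i, v i‖ ^ 2 = ∑ i, ‖v i‖ ^ 2 := by
  have e1 : 𝒮.inn (∑ i, v i) (∑ i, v i) = ∑ i, ∑ j, 𝒮.inn (v i) (v j) := by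
    have e0 : ∀ w : H, 𝒮.inn (∑ i, v i) w = ∑ i, 𝒮.inn (v i) w := by
      intro w
      induction (Finset.univ : Finset (Fin m)) using Finset.cons_induction with
      | empty => simp [𝒮.inn_zero_left']
      | cons a s ha ih => rw [Finset.sum_cons, Finset.sum_cons, 𝒮.inn_add_left', ih]
    rw [e0]
    refine Finset.sum_congr rfl fun i _ => ?_
    exact map_sum (𝒮.innR (v i)) _ _
  have e2 : 𝒮.inn (∑ i, v i) (∑ i, v i) = ∑ i, 𝒮.inn (v i) (v i) := by
    rw [e1]
    refine Finset.sum_congr rfl fun i _ => ?_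
    exact Finset.sum_eq_single i (fun j _ hj => h i j (Ne.symm hj)) (by simp)
  have e3 := congrArg QuaternionAlgebra.re e2
  rw [𝒮.re_inn_self] at e3
  rw [e3]
  rw [show (∑ i, 𝒮.inn (v i) (v i)).re = reH (∑ i, 𝒮.inn (v i) (v i)) from rfl,
    map_sum reH _ _]
  exact Finset.sum_congr rfl fun i _ => 𝒮.re_inn_self (v i)

section Basis

variable {N : Set H} {L : ℍ → H → H}

lemma coord_L (hN : 𝒮.IsHilbertBasis N) (hLN : 𝒮.IsInducedLSM N L)
    {z₀ : H} (hz₀ : z₀ ∈ N) (q : ℍ) (w : H) :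
    𝒮.inn z₀ (L q w) = q * 𝒮.inn z₀ w := by
  classical
  have h := (hLN q w).map (𝒮.innR z₀) (𝒮.innR_continuous z₀)
  have h2 : ((𝒮.innR z₀) ∘ fun z : N => 𝒮.smul (z : H) (q * 𝒮.inn (z : H) w))
      = fun z : N => if z = (⟨z₀, hz₀⟩ : N) then q * 𝒮.inn z₀ w else 0 := by
    funext z
    show 𝒮.inn z₀ (𝒮.smul (z : H) (q * 𝒮.inn (z : H) w)) = _
    rw [𝒮.inn_smul_right]
    by_cases hz : z = (⟨z₀, hz₀⟩ : N)
    · rw [if_pos hz, hz]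
      have h1 : 𝒮.inn z₀ z₀ = 1 := by
        rw [𝒮.inn_self_eq, hN.1 z₀ hz₀]
        norm_num
      simp [h1]
    · rw [if_neg hz]
      have hzz : (z : H) ≠ z₀ := fun he => hz (Subtype.ext he)
      rw [hN.2.1 z₀ hz₀ (z : H) z.2 (Ne.symm hzz), zero_mul]
  rw [h2] at h
  exact (h.unique (hasSum_ite_eq (⟨z₀, hz₀⟩ : N) (q * 𝒮.inn z₀ w)))

lemma L_one (hN : 𝒮.IsHilbertBasis N) (hLN : 𝒮.IsInducedLSM N L) (w : H) :
    L 1 w = w := by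
  have h : ∀ z ∈ N, 𝒮.inn z (L 1 w - w) = 0 := by
    intro z hz
    have := (𝒮.innR z).map_sub (L 1 w) w
    rw [innR_apply, innR_apply, innR_apply] at this
    rw [this, 𝒮.coord_L hN hLN hz, one_mul, sub_self]
  exact sub_eq_zero.mp (hN.2.2 _ h)

lemma hasSum_inn_L (hN : 𝒮.IsHilbertBasis N) (hLN : 𝒮.IsInducedLSM N L)
    (q : ℍ) (w : H) :
    HasSum (fun z : N => ((‖q‖ ^ 2 * ‖𝒮.inn (z : H) w‖ ^ 2 : ℝ) : ℍ))
      (𝒮.inn (L q w) (L q w)) := by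
  have h := (hLN q w).map (𝒮.innR (L q w)) (𝒮.innR_continuous _)
  have h2 : ((𝒮.innR (L q w)) ∘ fun z : N => 𝒮.smul (z : H) (q * 𝒮.inn (z : H) w))
      = fun z : N => ((‖q‖ ^ 2 * ‖𝒮.inn (z : H) w‖ ^ 2 : ℝ) : ℍ) := by
    funext z
    show 𝒮.inn (L q w) (𝒮.smul (z : H) (q * 𝒮.inn (z : H) w)) = _
    rw [𝒮.inn_smul_right]
    have h3 : 𝒮.inn (L q w) (z : H) = star (q * 𝒮.inn (z : H) w) := by
      rw [𝒮.inn_conj, 𝒮.coord_L hN hLN z.2]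
    rw [h3, quat_star_mul_self, norm_mul, mul_pow]
  rw [h2] at h
  exact h

lemma norm_L (hN : 𝒮.IsHilbertBasis N) (hLN : 𝒮.IsInducedLSM N L)
    (q : ℍ) (w : H) : ‖L q w‖ = ‖q‖ * ‖w‖ := by
  have hA := 𝒮.hasSum_inn_L hN hLN q w
  have hB : HasSum (fun z : N => ((‖𝒮.inn (z : H) w‖ ^ 2 : ℝ) : ℍ)) (𝒮.inn w w) := by
    have := 𝒮.hasSum_inn_L hN hLN 1 w
    rw [𝒮.L_one hN hLN] at this
    simpa using this
  have hC := hB.map (AddMonoidHom.mulLeft (((‖q‖ ^ 2 : ℝ)) : ℍ))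
    (continuous_const.mul continuous_id)
  have h4 : (AddMonoidHom.mulLeft (((‖q‖ ^ 2 : ℝ)) : ℍ)) ∘
      (fun z : N => ((‖𝒮.inn (z : H) w‖ ^ 2 : ℝ) : ℍ))
      = fun z : N => ((‖q‖ ^ 2 * ‖𝒮.inn (z : H) w‖ ^ 2 : ℝ) : ℍ) := by
    funext z
    show (((‖q‖ ^ 2 : ℝ)) : ℍ) * _ = _
    rw [← Quaternion.coe_mul]
  rw [h4] at hC
  have h5 : 𝒮.inn (L q w) (L q w) = (((‖q‖ ^ 2 : ℝ)) : ℍ) * 𝒮.inn w w := hA.unique hC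
  have h6 := congrArg QuaternionAlgebra.re h5
  rw [𝒮.re_inn_self, Quaternion.coe_mul_eq_smul, Quaternion.re_smul, smul_eq_mul,
    𝒮.re_inn_self] at h6
  have h7 : (‖q‖ * ‖w‖) ^ 2 = ‖q‖ ^ 2 * ‖w‖ ^ 2 := by ring
  have hle : ‖L q w‖ ≤ ‖q‖ * ‖w‖ := sq_le_imp (by positivity) (by rw [h6, h7])
  have hge : ‖q‖ * ‖w‖ ≤ ‖L q w‖ := sq_le_imp (norm_nonneg _) (by rw [h6, h7])
  exact le_antisymm hle hge

end Basis

end QHS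

end Aux2
section Aux3

variable {H : Type} [NormedAddCommGroup H] {𝒮 : QHS H} {ι : ℍ} {P : Set ℍ → H → H}

lemma P_empty (hP : IsQPVM 𝒮 ι P) (u : H) : P ∅ u = 0 := by
  have h := hP.sigma_add (fun _ => ∅)
    (fun _ => ⟨MeasurableSet.empty, Set.empty_subset _⟩)
    (fun n m _ => by simp) u
  exact tendsto_nhds_unique tendsto_const_nhds h.summable.tendsto_atTop_zero

lemma P_map_zero (hP : IsQPVM 𝒮 ι P) {E : Set ℍ} (hE : MeasurableSet E)
    (hE2 : E ⊆ Cplus ι) : P E 0 = 0 := by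
  have h := (hP.proj_linear E hE hE2).1 0 0
  rw [add_zero] at h
  exact left_eq_add.mp h

lemma P_contract (hP : IsQPVM 𝒮 ι P) {E : Set ℍ} (hE : MeasurableSet E)
    (hE2 : E ⊆ Cplus ι) (u : H) : ‖P E u‖ ≤ ‖u‖ := by
  have h1 : 𝒮.inn (P E u) (P E u) = 𝒮.inn u (P E u) := by
    rw [hP.proj_sa E hE hE2 u (P E u), hP.proj_idem E hE hE2 u]
  have h2 : ‖P E u‖ ^ 2 = (𝒮.inn u (P E u)).re := by
    rw [← 𝒮.re_inn_self, h1]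
  have h3 : (𝒮.inn u (P E u)).re ≤ ‖u‖ * ‖P E u‖ :=
    le_trans (quat_re_le_norm _) (𝒮.norm_inn_le _ _)
  rcases eq_or_lt_of_le (norm_nonneg (P E u)) with h4 | h4
  · rw [← h4]; exact norm_nonneg u
  · nlinarith

lemma P_finadd (hP : IsQPVM 𝒮 ι P) {m : ℕ} (F : Fin m → Set ℍ)
    (hF : ∀ ℓ, MeasurableSet (F ℓ) ∧ F ℓ ⊆ Cplus ι)
    (hdisj : Pairwise fun ℓ ℓ' => Disjoint (F ℓ) (F ℓ')) (u : H) :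
    P (⋃ ℓ, F ℓ) u = ∑ ℓ, P (F ℓ) u := by
  classical
  let G : ℕ → Set ℍ := fun k => if h : k < m then F ⟨k, h⟩ else ∅
  have hGpos : ∀ (k : ℕ) (h : k < m), G k = F ⟨k, h⟩ := fun k h => dif_pos h
  have hGneg : ∀ (k : ℕ), ¬k < m → G k = ∅ := fun k h => dif_neg h
  have hGm : ∀ n, MeasurableSet (G n) ∧ G n ⊆ Cplus ι := by
    intro n
    by_cases h : n < m
    · rw [hGpos n h]; exact hF ⟨n, h⟩
    · rw [hGneg n h]; exact ⟨MeasurableSet.empty, Set.empty_subset _⟩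
  have hGd : Pairwise fun n k => Disjoint (G n) (G k) := by
    intro n k hnk
    by_cases hn : n < m
    · by_cases hk : k < m
      · rw [hGpos n hn, hGpos k hk]
        exact hdisj fun h => hnk (congrArg Fin.val h)
      · rw [hGneg k hk]; exact Set.disjoint_empty _
    · rw [hGneg n hn]; exact Set.empty_disjoint _
  have h := hP.sigma_add G hGm hGd u
  have hU : (⋃ n, G n) = ⋃ ℓ, F ℓ := by
    ext x
    simp only [Set.mem_iUnion]
    constructor
    · rintro ⟨n, hx⟩
      by_cases hn : n < m
      · rw [hGpos n hn] at hx; exact ⟨⟨n, hn⟩, hx⟩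
      · rw [hGneg n hn] at hx; exact absurd hx (Set.notMem_empty x)
    · rintro ⟨ℓ, hx⟩
      exact ⟨ℓ.val, by rw [hGpos ℓ.val ℓ.isLt, Fin.eta]; exact hx⟩
  rw [hU] at h
  have h2 : HasSum (fun n => P (G n) u) (∑ n ∈ Finset.range m, P (G n) u) := by
    apply hasSum_sum_of_ne_finset_zero
    intro n hn
    have hn' : ¬n < m := by simpa using hn
    rw [hGneg n hn']; exact P_empty hP u
  rw [h.unique h2, ← Fin.sum_univ_eq_sum_range (fun k => P (G k) u) m]
  refine Finset.sum_congr rfl fun ℓ _ => ?_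
  rw [hGpos ℓ.val ℓ.isLt, Fin.eta]

end Aux3

/-- For an iqPVM `(P, L)` over `ℂ_ι⁺` and a simple function
`s = Σ_ℓ S_ℓ χ_{E_ℓ}` (pairwise disjoint Borel `E_ℓ ⊆ ℂ_ι⁺`), the elementary
integral `∫ s dP = Σ_ℓ L_{S_ℓ} P(E_ℓ)` satisfies `‖∫ s dP‖ = ‖s‖_∞^{(P)}`. -/
theorem simple_integral_norm
    {H : Type} [NormedAddCommGroup H] [CompleteSpace H] (𝒮 : QHS H)
    (ι : ℍ) (hι : ι ^ 2 = -1)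
    (P : Set ℍ → H → H) (L : ℍ → H → H)
    (h𝒫 : IsIQPVM 𝒮 ι P L)
    (n : ℕ) (c : Fin n → ℍ) (E : Fin n → Set ℍ)
    (hdata : IsSimpleData ι c E) :
    opNorm (fun u : H => ∑ ℓ : Fin n, L (c ℓ) (P (E ℓ) u))
      = essSupNorm ι P (fun x => ∑ ℓ : Fin n, Set.indicator (E ℓ) (fun _ => c ℓ) x) := by
  classical
  obtain ⟨hP, hLSM, hcomm⟩ := h𝒫
  obtain ⟨N, hN, hLN⟩ := hLSM
  obtain ⟨hmeas, hdisj⟩ := hdata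
  have hEm : ∀ ℓ, MeasurableSet (E ℓ) := fun ℓ => (hmeas ℓ).1
  have hEs : ∀ ℓ, E ℓ ⊆ Cplus ι := fun ℓ => (hmeas ℓ).2
  set s : ℍ → ℍ := fun x => ∑ ℓ : Fin n, Set.indicator (E ℓ) (fun _ => c ℓ) x with hs
  set T : H → H := fun u => ∑ ℓ : Fin n, L (c ℓ) (P (E ℓ) u) with hT
  -- value of s on E ℓ
  have hsval : ∀ (ℓ : Fin n) (x : ℍ), x ∈ E ℓ → s x = c ℓ := by
    intro ℓ x hx
    rw [hs]
    refine (Finset.sum_eq_single ℓ (fun m _ hm => ?_) (by simp)).trans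
      (Set.indicator_of_mem hx _)
    have hxm : x ∉ E m := fun hxm =>
      Set.disjoint_left.mp (hdisj hm) hxm hx
    exact Set.indicator_of_notMem hxm _
  have hs0 : ∀ x : ℍ, (∀ ℓ, x ∉ E ℓ) → s x = 0 := by
    intro x hx
    rw [hs]
    exact Finset.sum_eq_zero fun ℓ _ => Set.indicator_of_notMem (hx ℓ) _
  -- L (c m) 0 = 0
  have hL0 : ∀ q : ℍ, L q (0 : H) = 0 := by
    intro q
    have := 𝒮.norm_L hN hLN q (0 : H)
    rw [norm_zero, mul_zero] at this
    exact norm_eq_zero.mp this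
  -- orthogonality of ranges of P (E ℓ)
  have horth : ∀ (x y : H) (ℓ m : Fin n), ℓ ≠ m →
      𝒮.inn (P (E ℓ) x) (P (E m) y) = 0 := by
    intro x y ℓ m hlm
    rw [hP.proj_sa (E ℓ) (hEm ℓ) (hEs ℓ) x (P (E m) y),
      ← hP.inter (E ℓ) (E m) (hEm ℓ) (hEs ℓ) (hEm m) (hEs m) y,
      Set.disjoint_iff_inter_eq_empty.mp (hdisj hlm), P_empty hP, 𝒮.inn_zero_right']
  -- the superlevel set identity
  have hGset : ∀ k : ℝ, 0 ≤ k →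
      {x | x ∈ Cplus ι ∧ k < ‖s x‖} = ⋃ ℓ, (if k < ‖c ℓ‖ then E ℓ else ∅) := by
    intro k hk
    ext x
    simp only [Set.mem_setOf_eq, Set.mem_iUnion]
    constructor
    · rintro ⟨hxC, hxk⟩
      by_cases hex : ∃ ℓ, x ∈ E ℓ
      · obtain ⟨ℓ, hℓ⟩ := hex
        rw [hsval ℓ x hℓ] at hxk
        exact ⟨ℓ, by rw [if_pos hxk]; exact hℓ⟩
      · push_neg at hex
        rw [hs0 x hex, norm_zero] at hxk
        exact absurd hxk (not_lt.mpr hk)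
    · rintro ⟨ℓ, hℓ⟩
      by_cases hc : k < ‖c ℓ‖
      · rw [if_pos hc] at hℓ
        exact ⟨hEs ℓ hℓ, by rw [hsval ℓ x hℓ]; exact hc⟩
      · rw [if_neg hc] at hℓ
        exact absurd hℓ (Set.notMem_empty x)
  -- the two defining sets coincide
  have hset : {C : ℝ | 0 ≤ C ∧ ∀ u : H, ‖T u‖ ≤ C * ‖u‖}
      = {k : ℝ | 0 ≤ k ∧ ∀ u : H, P {x | x ∈ Cplus ι ∧ k < ‖s x‖} u = 0} := by
    ext k
    simp only [Set.mem_setOf_eq]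
    constructor
    · rintro ⟨hk0, hbound⟩
      refine ⟨hk0, fun u => ?_⟩
      rw [hGset k hk0]
      have hFm : ∀ ℓ : Fin n, MeasurableSet (if k < ‖c ℓ‖ then E ℓ else ∅)
          ∧ (if k < ‖c ℓ‖ then E ℓ else ∅) ⊆ Cplus ι := by
        intro ℓ
        by_cases hc : k < ‖c ℓ‖
        · rw [if_pos hc]; exact hmeas ℓ
        · rw [if_neg hc]; exact ⟨MeasurableSet.empty, Set.empty_subset _⟩
      have hFd : Pairwise fun ℓ ℓ' =>
          Disjoint (if k < ‖c ℓ‖ then E ℓ else ∅) (if k < ‖c ℓ'‖ then E ℓ' else ∅) := by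
        intro ℓ ℓ' hll
        by_cases h1 : k < ‖c ℓ‖
        · by_cases h2 : k < ‖c ℓ'‖
          · rw [if_pos h1, if_pos h2]; exact hdisj hll
          · rw [if_neg h2]; exact Set.disjoint_empty _
        · rw [if_neg h1]; exact Set.empty_disjoint _
      rw [P_finadd hP _ hFm hFd u]
      refine Finset.sum_eq_zero fun ℓ _ => ?_
      by_cases hc : k < ‖c ℓ‖
      · rw [if_pos hc]
        -- show P (E ℓ) u = 0
        by_contra h0
        set w : H := P (E ℓ) u with hw
        have hw0 : w ≠ 0 := h0
        have hTw : T w = L (c ℓ) w := by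
          rw [hT]
          show (∑ m : Fin n, L (c m) (P (E m) w)) = L (c ℓ) w
          have hwfix : L (c ℓ) (P (E ℓ) w) = L (c ℓ) w := by
            congr 1
            rw [hw, hP.proj_idem (E ℓ) (hEm ℓ) (hEs ℓ) u]
          rw [← hwfix]
          have e := Finset.sum_eq_single (M := H) (f := fun m => L (c m) (P (E m) w))
            (s := Finset.univ) ℓ ?_ ?_
          · exact e
          · intro m _ hm
            have hm0 : P (E m) w = 0 := by
              rw [hw, ← hP.inter (E m) (E ℓ) (hEm m) (hEs m) (hEm ℓ) (hEs ℓ) u,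
                Set.disjoint_iff_inter_eq_empty.mp (hdisj hm), P_empty hP]
            show L (c m) (P (E m) w) = 0
            rw [hm0, hL0]
          · intro h
            exact absurd (Finset.mem_univ ℓ) h
        have h1 := hbound w
        rw [hTw, 𝒮.norm_L hN hLN] at h1
        have hwpos : 0 < ‖w‖ := norm_pos_iff.mpr hw0
        have : ‖c ℓ‖ ≤ k := le_of_mul_le_mul_right h1 hwpos
        exact absurd hc (not_lt.mpr this)
      · rw [if_neg hc]; exact P_empty hP u
    · rintro ⟨hk0, hnull⟩
      refine ⟨hk0, fun u => ?_⟩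
      -- P (E ℓ) vanishes when ‖c ℓ‖ > k
      have hGm : MeasurableSet {x | x ∈ Cplus ι ∧ k < ‖s x‖} := by
        rw [hGset k hk0]
        exact MeasurableSet.iUnion fun ℓ => by
          by_cases hc : k < ‖c ℓ‖
          · rw [if_pos hc]; exact hEm ℓ
          · rw [if_neg hc]; exact MeasurableSet.empty
      have hGs : {x | x ∈ Cplus ι ∧ k < ‖s x‖} ⊆ Cplus ι := fun x hx => hx.1
      have hPzero : ∀ ℓ : Fin n, k < ‖c ℓ‖ → P (E ℓ) u = 0 := by
        intro ℓ hc
        have hsub : E ℓ ⊆ {x | x ∈ Cplus ι ∧ k < ‖s x‖} := fun x hx =>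
          ⟨hEs ℓ hx, by rw [hsval ℓ x hx]; exact hc⟩
        have : P (E ℓ) u = P (E ℓ) (P {x | x ∈ Cplus ι ∧ k < ‖s x‖} u) := by
          rw [← hP.inter (E ℓ) _ (hEm ℓ) (hEs ℓ) hGm hGs u,
            Set.inter_eq_left.mpr hsub]
        rw [this, hnull u, P_map_zero hP (hEm ℓ) (hEs ℓ)]
      -- Pythagoras bound
      have hvorth : ∀ i j, i ≠ j →
          𝒮.inn (L (c i) (P (E i) u)) (L (c j) (P (E j) u)) = 0 := by
        intro i j hij
        rw [← hcomm (E i) (hEm i) (hEs i) (c i) u,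
          ← hcomm (E j) (hEm j) (hEs j) (c j) u]
        exact horth _ _ i j hij
      have hpy : ‖T u‖ ^ 2 = ∑ ℓ, ‖L (c ℓ) (P (E ℓ) u)‖ ^ 2 :=
        𝒮.norm_sum_sq _ hvorth
      have hterm : ∀ ℓ : Fin n,
          ‖L (c ℓ) (P (E ℓ) u)‖ ^ 2 ≤ k ^ 2 * ‖P (E ℓ) u‖ ^ 2 := by
        intro ℓ
        rw [𝒮.norm_L hN hLN, mul_pow]
        by_cases hc : k < ‖c ℓ‖
        · rw [hPzero ℓ hc, norm_zero]
          simp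
        · have : ‖c ℓ‖ ^ 2 ≤ k ^ 2 :=
            pow_le_pow_left₀ (norm_nonneg _) (not_lt.mp hc) 2
          exact mul_le_mul_of_nonneg_right this (sq_nonneg _)
      have hPorth : ∀ i j, i ≠ j → 𝒮.inn (P (E i) u) (P (E j) u) = 0 :=
        fun i j hij => horth u u i j hij
      have hPsum : ∑ ℓ, ‖P (E ℓ) u‖ ^ 2 ≤ ‖u‖ ^ 2 := by
        rw [← 𝒮.norm_sum_sq _ hPorth]
        have h1 : ∑ ℓ, P (E ℓ) u = P (⋃ ℓ, E ℓ) u :=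
          (P_finadd hP E hmeas hdisj u).symm
        rw [h1]
        exact pow_le_pow_left₀ (norm_nonneg _)
          (P_contract hP (MeasurableSet.iUnion hEm) (Set.iUnion_subset hEs) u) 2
      have hfin : ‖T u‖ ^ 2 ≤ (k * ‖u‖) ^ 2 := by
        rw [hpy, mul_pow]
        calc ∑ ℓ, ‖L (c ℓ) (P (E ℓ) u)‖ ^ 2
            ≤ ∑ ℓ, k ^ 2 * ‖P (E ℓ) u‖ ^ 2 := Finset.sum_le_sum fun ℓ _ => hterm ℓ
          _ = k ^ 2 * ∑ ℓ, ‖P (E ℓ) u‖ ^ 2 := by rw [Finset.mul_sum]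
          _ ≤ k ^ 2 * ‖u‖ ^ 2 := by
              exact mul_le_mul_of_nonneg_left hPsum (sq_nonneg k)
      exact sq_le_imp (by positivity) hfin
  rw [opNorm, essSupNorm]
  exact congrArg sInf hset
end
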